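/- arXiv:1807.10988 — 9 statements merged into one kernel-verified Lean document; each statement's English description precedes it below -/
import Mathlib

section
/- Let G be a graph, let β be a solution to the Naji system of G, and let c be a vertex of G. Define δ_c(u,v) = 1 if u = c, or if v = c and uv is an edge of G; otherwise δ_c(u,v) = 0. Then β + δ_c is also a solution to the Naji system of G. -/
set_option maxHeartbeats 1000000


/-- A solution to the Naji system of a graph `G`. -/
def NajiSolution {V : Type*} (G : SimpleGraph V) (β : V → V → ZMod 2) : Prop :=
  (∀ v w : V, G.Adj v w → β v w + β w v = 1) ∧
  (∀ x v w : V, x ≠ v → x ≠ w → G.Adj v w → ¬G.Adj x v → ¬G.Adj x w →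
    β x v + β x w = 0) ∧
  (∀ x v w : V, v ≠ w → G.Adj x v → G.Adj x w → ¬G.Adj v w →
    β v w + β w v + β x v + β x w = 1)

/-- Reorienting at a vertex `c` preserves solutions of the Naji system:
`δ_c(u,v) = 1` iff `u = c`, or `v = c` and `uv` is an edge. -/
theorem naji_reorient {V : Type*} [DecidableEq V] (G : SimpleGraph V)
    [DecidableRel G.Adj] (β : V → V → ZMod 2) (hβ : NajiSolution G β) (c : V) :
    NajiSolution G (fun u v => β u v + (if u = c ∨ (v = c ∧ G.Adj u v) then 1 else 0)) := by
  obtain ⟨h1, h2, h3⟩ := hβ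
  have ch : (2 : ZMod 2) = 0 := by decide
  refine ⟨fun v w hvw => ?_, fun x v w hxv hxw hvw hxv' hxw' => ?_,
    fun x v w hvw hxv hxw hvw' => ?_⟩
  · have hne : v ≠ w := hvw.ne
    have hwv : G.Adj w v := hvw.symm
    simp only []
    split_ifs <;>
      first
        | linear_combination h1 v w hvw
        | linear_combination h1 v w hvw + ch
        | tauto
        | (subst_vars; simp_all; done)
  · simp only []
    split_ifs <;>
      first
        | linear_combination h2 x v w hxv hxw hvw hxv' hxw'
        | linear_combination h2 x v w hxv hxw hvw hxv' hxw' + ch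
        | tauto
        | (subst_vars; simp_all; done)
  · have hxv' : x ≠ v := hxv.ne
    have hxw' : x ≠ w := hxw.ne
    have hvx : G.Adj v x := hxv.symm
    have hwx : G.Adj w x := hxw.symm
    have hwv' : ¬G.Adj w v := fun h => hvw' h.symm
    simp only [hvw', hwv', hxv, hxw, and_true, and_false, or_false]
    split_ifs <;>
      first
        | linear_combination h3 x v w hvw hxv hxw hvw'
        | linear_combination h3 x v w hvw hxv hxw hvw' + ch
        | linear_combination h3 x v w hvw hxv hxw hvw' + 2 * ch
        | tauto
        | (subst_vars; simp_all; done)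
end

section
/- Let G be a graph with a solution β to its Naji system, and suppose G contains an induced claw on vertices {x, a, b, c} where x is adjacent to a, b, c and no two of a, b, c are adjacent. Then exactly one or exactly three of the quantities β(a,b)+β(a,c), β(b,a)+β(b,c), β(c,a)+β(c,b) equal 1; equivalently, (β(a,b)+β(a,c)) + (β(b,a)+β(b,c)) + (β(c,a)+β(c,b)) = 1 in 𝔽₂. -/
/-- For an induced claw on `{x,a,b,c}` with centre `x`, the three quantities
`β a b + β a c`, `β b a + β b c`, `β c a + β c b` sum to `1` over `𝔽₂`,
i.e. exactly one or exactly three of them equal `1`. -/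
theorem naji_claw_parity {V : Type*} (G : SimpleGraph V) (β : V → V → ZMod 2)
    (hβ : NajiSolution G β) (x a b c : V)
    (hab : a ≠ b) (hac : a ≠ c) (hbc : b ≠ c)
    (hxa : G.Adj x a) (hxb : G.Adj x b) (hxc : G.Adj x c)
    (nab : ¬G.Adj a b) (nbc : ¬G.Adj b c) (nca : ¬G.Adj c a) :
    (β a b + β a c) + (β b a + β b c) + (β c a + β c b) = 1 := by
  obtain ⟨h1, h2, h3⟩ := hβ
  have e1 := h3 x a b hab hxa hxb nab
  have e2 := h3 x b c hbc hxb hxc nbc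
  have e3 := h3 x c a hac.symm hxc hxa nca
  have : (2 : ZMod 2) = 0 := rfl
  linear_combination e1 + e2 + e3 + (1 - β x a - β x b - β x c) * this
end

section
/- Let 𝒜 be a finite collection of closed arcs of a circle whose union covers the circle. Then there is a sequence (A₁, …, A_k) of arcs in 𝒜 covering the circle such that for each i (indices modulo k), the arc A_i has nonempty intersection with A_{i−1} and A_{i+1} but is disjoint from all other arcs A_j in the sequence. -/
open Set

private lemma coe_eq_coe_iff_int {x y : ℝ} :
    ((x : AddCircle (1:ℝ)) = (y : AddCircle (1:ℝ))) ↔ ∃ m : ℤ, x = y + m := by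
  rw [QuotientAddGroup.eq]
  simp only [AddSubgroup.mem_zmultiples_iff, zsmul_eq_mul, mul_one]
  constructor
  · rintro ⟨m, hm⟩; exact ⟨-m, by push_cast; linarith⟩
  · rintro ⟨m, hm⟩; exact ⟨-m, by push_cast; linarith⟩

private lemma coe_shift (x : ℝ) (m : ℤ) :
    ((x + m : ℝ) : AddCircle (1:ℝ)) = (x : AddCircle (1:ℝ)) :=
  coe_eq_coe_iff_int.2 ⟨m, rfl⟩

private lemma image_shift (a b : ℝ) (m : ℤ) :
    ((↑) : ℝ → AddCircle (1:ℝ)) '' Icc (a + m) (b + m) = ((↑) : ℝ → AddCircle (1:ℝ)) '' Icc a b := by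
  have h : Icc (a + (m:ℝ)) (b + m) = (fun x => x + (m:ℝ)) '' Icc a b := by
    rw [image_add_const_Icc]
  rw [h, Set.image_image]
  simp only [coe_shift]

private lemma inter_nonempty_iff {a b c d : ℝ} (hab : a ≤ b) (hcd : c ≤ d) :
    ((((↑) : ℝ → AddCircle (1:ℝ)) '' Icc a b) ∩ (((↑) : ℝ → AddCircle (1:ℝ)) '' Icc c d)).Nonempty ↔
      ∃ m : ℤ, c + m ≤ b ∧ a ≤ d + m := by
  constructor
  · rintro ⟨z, ⟨x, hx, hxz⟩, ⟨y, hy, hyz⟩⟩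
    obtain ⟨m, hm⟩ := coe_eq_coe_iff_int.1 (hxz.trans hyz.symm)
    exact ⟨m, by rcases hx with ⟨hx1, hx2⟩; rcases hy with ⟨hy1, hy2⟩; constructor <;> linarith⟩
  · rintro ⟨m, h1, h2⟩
    refine ⟨((max a (c + m) : ℝ) : AddCircle (1:ℝ)),
      ⟨max a (c + m), ⟨le_max_left _ _, max_le hab h1⟩, rfl⟩,
      ⟨max a (c + m) - m, ⟨?_, ?_⟩, ?_⟩⟩
    · simp only [le_sub_iff_add_le]; exact le_max_right _ _
    · simp only [sub_le_iff_le_add]; exact max_le (by linarith) (by linarith)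
    · have := coe_shift (max a (c + m) - m) m; simpa using this

private lemma arc_lift (S : Set (AddCircle (1:ℝ))) (hcl : IsClosed S) (hconn : IsConnected S)
    (hne : S ≠ univ) :
    ∃ a b : ℝ, 0 ≤ a ∧ a < 1 ∧ a ≤ b ∧ b - a < 1 ∧
      S = ((↑) : ℝ → AddCircle (1:ℝ)) '' Icc a b := by
  haveI : Fact ((0:ℝ) < 1) := ⟨one_pos⟩
  obtain ⟨p, hp⟩ : ∃ p, p ∉ S := by
    by_contra h; push_neg at h; exact hne (eq_univ_of_forall h)
  obtain ⟨t, rfl⟩ := QuotientAddGroup.mk_surjective p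
  set e := AddCircle.equivIco 1 t with he
  set f : AddCircle (1:ℝ) → ℝ := fun z => (e z : ℝ) with hf
  have hcoe : ∀ z : AddCircle (1:ℝ), ((f z : ℝ) : AddCircle (1:ℝ)) = z := fun z =>
    (AddCircle.equivIco 1 t).symm_apply_apply z
  have hmem : ∀ z, f z ∈ Ico t (t + 1) := fun z => (e z).2
  have htt : t ∈ Ico t (t + 1) := ⟨le_refl t, by linarith⟩
  have hfS : ∀ z ∈ S, f z ≠ t := by
    intro z hz h
    apply hp
    have : ((t : ℝ) : AddCircle (1:ℝ)) = z := by rw [← h]; exact hcoe z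
    rwa [this]
  have hcont : ContinuousOn f S := by
    intro z hz
    have hzt : z ≠ ((t : ℝ) : AddCircle (1:ℝ)) := by
      intro h
      exact hfS z hz ((AddCircle.coe_eq_coe_iff_of_mem_Ico (hmem z) htt).1 (by rw [hcoe z, h]))
    exact (continuous_subtype_val.continuousAt.comp
      (AddCircle.continuousAt_equivIco 1 t hzt)).continuousWithinAt
  have hScomp : IsCompact S := hcl.isCompact
  have hTcomp : IsCompact (f '' S) := hScomp.image_of_continuousOn hcont
  have hTconn : IsConnected (f '' S) := hconn.image f hcont
  have hTne : (f '' S).Nonempty := hTconn.nonempty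
  have hT : f '' S = Icc (sInf (f '' S)) (sSup (f '' S)) :=
    eq_Icc_of_connected_compact hTconn hTcomp
  set a := sInf (f '' S) with ha
  set b := sSup (f '' S) with hb
  have haT : a ∈ f '' S := hTcomp.sInf_mem hTne
  have hbT : b ∈ f '' S := hTcomp.sSup_mem hTne
  have hab : a ≤ b := csInf_le_csSup hTne hTcomp.bddBelow hTcomp.bddAbove
  have hat : t < a := by
    obtain ⟨z, hz, h⟩ := haT
    have h1 : t ≤ f z := (hmem z).1
    have h2 : f z ≠ t := hfS z hz
    rw [h] at h1 h2
    exact lt_of_le_of_ne h1 (Ne.symm h2)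
  have hbt : b < t + 1 := by
    obtain ⟨z, hz, h⟩ := hbT
    rw [← h]; exact (hmem z).2
  have hS : S = ((↑) : ℝ → AddCircle (1:ℝ)) '' Icc a b := by
    rw [← hT, Set.image_image]
    ext z
    constructor
    · intro hz; exact ⟨z, hz, hcoe z⟩
    · rintro ⟨w, hw, rfl⟩; show ((f w : ℝ) : AddCircle (1:ℝ)) ∈ S; rwa [hcoe w]
  refine ⟨a + (-⌊a⌋ : ℤ), b + (-⌊a⌋ : ℤ), ?_, ?_, by linarith, by linarith, ?_⟩
  · push_cast
    have := Int.floor_le a; linarith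
  · push_cast
    have := Int.lt_floor_add_one a; linarith
  · rw [image_shift]; exact hS

private lemma chain_cover (F : Finset (ℝ × ℝ)) :
    ∀ N : ℕ, ∀ u v : ℝ, (F.filter fun I => u < I.2).card ≤ N → u ≤ v →
    (∀ x ∈ Icc u v, ∃ I ∈ F, x ∈ Icc I.1 I.2) →
    ∃ (k : ℕ) (c : ℕ → ℝ × ℝ), 0 < k ∧ (∀ i < k, c i ∈ F) ∧
      (c 0).1 ≤ u ∧ v ≤ (c (k-1)).2 ∧ (∀ i, i + 1 < k → (c (i+1)).1 ≤ (c i).2) := by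
  intro N
  induction N with
  | zero =>
    intro u v hcard huv hcov
    obtain ⟨I₀, hI₀F, hI₀⟩ := hcov u ⟨le_refl u, huv⟩
    by_cases hv : v ≤ I₀.2
    · exact ⟨1, fun _ => I₀, one_pos, fun i _ => hI₀F, hI₀.1, hv, fun i hi => by omega⟩
    · exfalso
      push_neg at hv
      obtain ⟨J, hJF, hJ⟩ := hcov v ⟨huv, le_refl v⟩
      have hJ2 : u < J.2 := lt_of_le_of_lt hI₀.2 (lt_of_lt_of_le hv hJ.2)
      have hmem : J ∈ F.filter fun I => u < I.2 := Finset.mem_filter.2 ⟨hJF, hJ2⟩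
      have := Finset.card_pos.2 ⟨J, hmem⟩
      omega
  | succ N ih =>
    intro u v hcard huv hcov
    obtain ⟨I₀, hI₀F, hI₀⟩ := hcov u ⟨le_refl u, huv⟩
    by_cases hv : v ≤ I₀.2
    · exact ⟨1, fun _ => I₀, one_pos, fun i _ => hI₀F, hI₀.1, hv, fun i hi => by omega⟩
    push_neg at hv
    have huq : u ≤ I₀.2 := hI₀.2
    have hI' : ∃ I ∈ F, I.1 ≤ I₀.2 ∧ I₀.2 < I.2 := by
      by_contra hcon
      push_neg at hcon
      have hGne : (F.filter fun I => I₀.2 < I.1).Nonempty := by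
        obtain ⟨J, hJF, hJ⟩ := hcov v ⟨huv, le_refl v⟩
        have hJ2 : I₀.2 < J.2 := lt_of_lt_of_le hv hJ.2
        have hJ1 : I₀.2 < J.1 := by
          by_contra h; push_neg at h; exact absurd (hcon J hJF h) (not_le.2 hJ2)
        exact ⟨J, Finset.mem_filter.2 ⟨hJF, hJ1⟩⟩
      obtain ⟨Im, hImG, hImmin⟩ : ∃ Im ∈ F.filter fun I => I₀.2 < I.1,
          ∀ I ∈ F.filter fun I => I₀.2 < I.1, Im.1 ≤ I.1 := by
        obtain ⟨Im, h1, h2⟩ := Finset.exists_min_image _ Prod.fst hGne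
        exact ⟨Im, h1, h2⟩
      have hqm : I₀.2 < Im.1 := (Finset.mem_filter.1 hImG).2
      set x := min v ((I₀.2 + Im.1) / 2) with hx
      have hqx : I₀.2 < x := lt_min hv (by linarith)
      have hxm : x < Im.1 := lt_of_le_of_lt (min_le_right _ _) (by linarith)
      obtain ⟨I, hIF, hI⟩ := hcov x ⟨le_trans huq hqx.le, min_le_left _ _⟩
      by_cases h1 : I.1 ≤ I₀.2
      · exact absurd (le_trans hI.2 (hcon I hIF h1)) (not_le.2 hqx)
      · push_neg at h1
        have : Im.1 ≤ I.1 := hImmin I (Finset.mem_filter.2 ⟨hIF, h1⟩)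
        exact absurd hI.1 (not_le.2 (lt_of_lt_of_le hxm this))
    obtain ⟨I', hI'F, hI'1, hI'2⟩ := hI'
    by_cases hv' : v ≤ I'.2
    · refine ⟨2, fun t => if t = 0 then I₀ else I', two_pos, ?_, hI₀.1, by simpa using hv', ?_⟩
      · intro i _; dsimp only; split <;> assumption
      · intro i hi
        have : i = 0 := by omega
        subst this; simpa using hI'1
    push_neg at hv'
    have hcard' : (F.filter fun I => I'.2 < I.2).card ≤ N := by
      have hsub : (F.filter fun I => I'.2 < I.2) ⊆ (F.filter fun I => u < I.2).erase I' := by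
        intro I hI
        rcases Finset.mem_filter.1 hI with ⟨hIF2, hIlt⟩
        refine Finset.mem_erase.2 ⟨?_, Finset.mem_filter.2 ⟨hIF2, ?_⟩⟩
        · rintro rfl; exact absurd hIlt (lt_irrefl _)
        · exact lt_of_le_of_lt (le_trans huq hI'2.le) hIlt
      have hI'mem : I' ∈ F.filter fun I => u < I.2 :=
        Finset.mem_filter.2 ⟨hI'F, lt_of_le_of_lt huq hI'2⟩
      calc (F.filter fun I => I'.2 < I.2).card
          ≤ ((F.filter fun I => u < I.2).erase I').card := Finset.card_le_card hsub
        _ = (F.filter fun I => u < I.2).card - 1 := Finset.card_erase_of_mem hI'mem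
        _ ≤ N := by omega
    obtain ⟨k', c', hk'pos, hc'F, hc'0, hc'last, hc'link⟩ := ih I'.2 v hcard' hv'.le
      (fun x hx => hcov x ⟨le_trans huq (le_trans hI'2.le hx.1), hx.2⟩)
    refine ⟨k' + 2, fun t => if t = 0 then I₀ else if t = 1 then I' else c' (t - 2),
      by omega, ?_, hI₀.1, ?_, ?_⟩
    · intro i hi
      dsimp only
      split
      · exact hI₀F
      · split
        · exact hI'F
        · exact hc'F _ (by omega)
    · have h2 : k' + 2 - 1 = (k' - 1) + 2 := by omega
      rw [h2]
      simpa using hc'last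
    · intro i hi
      rcases Nat.eq_or_lt_of_le (Nat.one_le_iff_ne_zero.2 (Nat.succ_ne_zero i)) with h | h
      · have : i = 0 := by omega
        subst this
        simpa using hI'1
      · rcases Nat.lt_or_ge i 2 with h2 | h2
        · have : i = 1 := by omega
          subst this
          simpa using hc'0
        · have e1 : i + 1 ≠ 0 := by omega
          have e2 : i + 1 ≠ 1 := by omega
          have e3 : i ≠ 0 := by omega
          have e4 : i ≠ 1 := by omega
          simp only [e1, e2, e3, e4, if_false]
          have : i + 1 - 2 = (i - 2) + 1 := by omega
          rw [this]
          exact hc'link (i - 2) (by omega)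

/-- Every finite cover of the circle by closed arcs contains a cyclic
sequence of arcs covering the circle in which consecutive arcs meet and
non-consecutive arcs are disjoint. -/
theorem minimal_arc_cover
    (𝒜 : Finset (Set (AddCircle (1 : ℝ))))
    (harc : ∀ A ∈ 𝒜, IsClosed A ∧ IsConnected A ∧ A ≠ Set.univ)
    (hcover : (⋃ A ∈ 𝒜, A) = Set.univ) :
    ∃ (k : ℕ), 0 < k ∧ ∃ A : ZMod k → Set (AddCircle (1 : ℝ)),
      (∀ i, A i ∈ 𝒜) ∧ (⋃ i, A i) = Set.univ ∧
      (∀ i j : ZMod k, (A i ∩ A j).Nonempty ↔ (j = i - 1 ∨ j = i ∨ j = i + 1)) := by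
  classical
  haveI : Fact ((0:ℝ) < 1) := ⟨one_pos⟩
  have hlift : ∀ A ∈ 𝒜, ∃ I : ℝ × ℝ, 0 ≤ I.1 ∧ I.1 < 1 ∧ I.1 ≤ I.2 ∧ I.2 - I.1 < 1 ∧
      A = ((↑) : ℝ → AddCircle (1:ℝ)) '' Icc I.1 I.2 := by
    intro A hA
    obtain ⟨hc, hcn, hu⟩ := harc A hA
    obtain ⟨a, b, h1, h2, h3, h4, h5⟩ := arc_lift A hc hcn hu
    exact ⟨(a, b), h1, h2, h3, h4, h5⟩
  choose! g hg0 hg1 hg2 hg3 hg4 using hlift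
  set F : Finset (ℝ × ℝ) :=
    (𝒜 ×ˢ ({-1, 0, 1} : Finset ℤ)).image
      (fun p => ((g p.1).1 + p.2, (g p.1).2 + p.2)) with hF
  have hFprop : ∀ I ∈ F, (((↑) : ℝ → AddCircle (1:ℝ)) '' Icc I.1 I.2) ∈ 𝒜 ∧
      I.1 ≤ I.2 ∧ I.2 - I.1 < 1 := by
    intro I hI
    rw [hF, Finset.mem_image] at hI
    obtain ⟨⟨A, m⟩, hAm, rfl⟩ := hI
    rw [Finset.mem_product] at hAm
    obtain ⟨hA, -⟩ := hAm
    refine ⟨?_, by simpa using hg2 A hA, by have := hg3 A hA; simp only; linarith⟩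
    show (((↑) : ℝ → AddCircle (1:ℝ)) '' Icc ((g A).1 + m) ((g A).2 + m)) ∈ 𝒜
    rw [image_shift, ← hg4 A hA]
    exact hA
  have hFcov : ∀ x ∈ Icc (0:ℝ) 1, ∃ I ∈ F, x ∈ Icc I.1 I.2 := by
    intro x hx
    have hxU : (x : AddCircle (1:ℝ)) ∈ ⋃ A ∈ 𝒜, A := by rw [hcover]; exact mem_univ _
    simp only [mem_iUnion] at hxU
    obtain ⟨A, hA, hxA⟩ := hxU
    rw [hg4 A hA] at hxA
    obtain ⟨y, hy, hyx⟩ := hxA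
    obtain ⟨m, hm⟩ := coe_eq_coe_iff_int.1 hyx.symm
    have h0 := hg0 A hA
    have h1 := hg1 A hA
    have h3 := hg3 A hA
    have hm3 : m = -1 ∨ m = 0 ∨ m = 1 := by
      have hlo : (-2:ℝ) < (m:ℝ) := by
        have := hy.1; have := hy.2; rcases hx with ⟨hx0, hx1⟩; linarith
      have hhi : (m:ℝ) ≤ 1 := by
        have := hy.1; rcases hx with ⟨hx0, hx1⟩; linarith
      have hlo' : (-2:ℤ) < m := by exact_mod_cast hlo
      have hhi' : m ≤ 1 := by exact_mod_cast hhi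
      omega
    refine ⟨((g A).1 + (m : ℤ), (g A).2 + (m : ℤ)), ?_, ?_, ?_⟩
    · rw [hF, Finset.mem_image]
      refine ⟨(A, m), Finset.mem_product.2 ⟨hA, ?_⟩, rfl⟩
      simp only [Finset.mem_insert, Finset.mem_singleton]
      omega
    · push_cast; have := hy.1; linarith
    · push_cast; have := hy.2; linarith
  set P : ℕ → Prop := fun k => 1 ≤ k ∧ ∃ c : ℕ → ℝ × ℝ,
    (∀ i < k, (((↑) : ℝ → AddCircle (1:ℝ)) '' Icc (c i).1 (c i).2) ∈ 𝒜 ∧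
        (c i).1 ≤ (c i).2 ∧ (c i).2 - (c i).1 < 1) ∧
    (∀ i, i + 1 < k → (c (i+1)).1 ≤ (c i).2) ∧ (c 0).1 + 1 ≤ (c (k-1)).2 with hPdef
  have hex : ∃ k, P k := by
    obtain ⟨k, c, hkpos, hcF, hc0, hclast, hlink⟩ :=
      chain_cover F F.card 0 1 (Finset.card_filter_le _ _) zero_le_one hFcov
    exact ⟨k, hkpos, c, fun i hi => hFprop _ (hcF i hi), hlink, by linarith⟩
  set k := Nat.find hex with hkdef
  obtain ⟨hk1, c, hmem, hlink, hwrap⟩ := Nat.find_spec hex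
  have hmin : ∀ j, j < k → ¬ P j := fun j hj => Nat.find_min hex hj
  have hk2 : 2 ≤ k := by
    rcases Nat.lt_or_ge k 2 with h | h
    · exfalso
      have hke : k - 1 = 0 := by omega
      rw [hke] at hwrap
      have := (hmem 0 (by omega)).2.2
      linarith
    · exact h
  -- strict monotonicity of right endpoints
  have hbmono : ∀ i, i + 1 < k → (c i).2 < (c (i+1)).2 := by
    intro i hik
    by_contra hcon
    push_neg at hcon
    rcases le_or_gt (c i).1 (c (i+1)).1 with hcase | hcase
    · -- drop arc i+1
      apply hmin (k-1) (by omega)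
      refine ⟨by omega, fun t => if t ≤ i then c t else c (t+1), ?_, ?_, ?_⟩
      · intro t ht
        dsimp only
        split
        · exact hmem t (by omega)
        · exact hmem (t+1) (by omega)
      · intro t ht
        dsimp only
        rcases Nat.lt_or_ge t i with h | h
        · rw [if_pos (by omega : t + 1 ≤ i), if_pos (by omega : t ≤ i)]
          exact hlink t (by omega)
        rcases Nat.eq_or_lt_of_le h with h' | h'
        · subst h'
          rw [if_neg (by omega), if_pos (le_refl i)]
          calc (c (i+1+1)).1 ≤ (c (i+1)).2 := hlink (i+1) (by omega)
            _ ≤ (c i).2 := hcon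
        · rw [if_neg (by omega), if_neg (by omega)]
          exact hlink (t+1) (by omega)
      · dsimp only
        rw [if_pos (by omega : (0:ℕ) ≤ i)]
        rcases Nat.lt_or_ge i (k-2) with h | h
        · rw [if_neg (by omega)]
          have e : k - 1 - 1 + 1 = k - 1 := by omega
          rw [e]
          exact hwrap
        · have hieq : i = k - 2 := by omega
          rw [if_pos (by omega : k - 1 - 1 ≤ i)]
          have e : k - 1 - 1 = i := by omega
          rw [e]
          have e2 : i + 1 = k - 1 := by omega
          calc (c 0).1 + 1 ≤ (c (k-1)).2 := hwrap
            _ ≤ (c i).2 := by rw [← e2]; exact hcon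
    · -- drop arc i
      apply hmin (k-1) (by omega)
      refine ⟨by omega, fun t => if t < i then c t else c (t+1), ?_, ?_, ?_⟩
      · intro t ht
        dsimp only
        split
        · exact hmem t (by omega)
        · exact hmem (t+1) (by omega)
      · intro t ht
        dsimp only
        rcases Nat.lt_or_ge (t+1) i with h | h
        · rw [if_pos h, if_pos (by omega)]
          exact hlink t (by omega)
        rcases Nat.eq_or_lt_of_le h with h' | h'
        · -- t + 1 = i
          rw [if_neg (by omega), if_pos (by omega : t < i)]
          have e : t + 1 + 1 = i + 1 := by omega
          rw [e]
          have e2 : (c i).1 ≤ (c t).2 := by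
            have e3 : i = t + 1 := by omega
            rw [e3]
            exact hlink t (by omega)
          linarith
        · rw [if_neg (by omega), if_neg (by omega)]
          exact hlink (t+1) (by omega)
      · dsimp only
        have e : k - 1 - 1 + 1 = k - 1 := by omega
        rw [if_neg (by omega : ¬ (k - 1 - 1 < i)), e]
        rcases Nat.eq_or_lt_of_le (Nat.zero_le i) with h0 | h0
        · rw [if_neg (by omega)]
          have hi0 : i = 0 := h0.symm
          rw [hi0] at hcase
          have : (c (0+1)).1 + 1 ≤ (c 0).1 + 1 := by linarith
          linarith [hwrap]
        · rw [if_pos h0]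
          exact hwrap
  -- separation of distant arcs
  have hsep : ∀ i j, i + 2 ≤ j → j < k → (c i).2 < (c j).1 := by
    intro i j hij hjk
    by_contra hcon
    push_neg at hcon
    apply hmin (k - (j - i - 1)) (by omega)
    refine ⟨by omega, fun t => if t ≤ i then c t else c (t + (j - i - 1)), ?_, ?_, ?_⟩
    · intro t ht
      dsimp only
      split
      · exact hmem t (by omega)
      · exact hmem _ (by omega)
    · intro t ht
      dsimp only
      rcases Nat.lt_or_ge t i with h | h
      · rw [if_pos (by omega : t + 1 ≤ i), if_pos (by omega : t ≤ i)]
        exact hlink t (by omega)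
      rcases Nat.eq_or_lt_of_le h with h' | h'
      · subst h'
        rw [if_neg (by omega), if_pos (le_refl i)]
        have e : i + 1 + (j - i - 1) = j := by omega
        rw [e]
        exact hcon
      · rw [if_neg (by omega), if_neg (by omega)]
        have e : t + 1 + (j - i - 1) = (t + (j - i - 1)) + 1 := by omega
        rw [e]
        exact hlink _ (by omega)
    · dsimp only
      rw [if_pos (by omega : (0:ℕ) ≤ i), if_neg (by omega : ¬ (k - (j - i - 1) - 1 ≤ i))]
      have e : k - (j - i - 1) - 1 + (j - i - 1) = k - 1 := by omega
      rw [e]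
      exact hwrap
  -- wrap separation
  have hwsep : ∀ i j, i < j → j < k → j - i + 1 < k → (c j).2 < (c i).1 + 1 := by
    intro i j hij hjk hlen
    by_contra hcon
    push_neg at hcon
    apply hmin (j - i + 1) hlen
    refine ⟨by omega, fun t => if t < j - i then c (i + 1 + t) else ((c i).1 + 1, (c i).2 + 1),
      ?_, ?_, ?_⟩
    · intro t ht
      dsimp only
      split
      · exact hmem (i + 1 + t) (by omega)
      · refine ⟨?_, ?_, ?_⟩
        · show (((↑) : ℝ → AddCircle (1:ℝ)) '' Icc ((c i).1 + 1) ((c i).2 + 1)) ∈ 𝒜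
          have e : ((c i).1 + 1, (c i).2 + 1) = ((c i).1 + ((1:ℤ):ℝ), (c i).2 + ((1:ℤ):ℝ)) := by
            push_cast; rfl
          have := image_shift (c i).1 (c i).2 1
          push_cast at this
          rw [this]
          exact (hmem i (by omega)).1
        · have := (hmem i (by omega)).2.1; dsimp only; linarith
        · have := (hmem i (by omega)).2.2; dsimp only; linarith
    · intro t ht
      dsimp only
      rcases Nat.lt_or_ge (t+1) (j-i) with h | h
      · rw [if_pos h, if_pos (by omega)]
        have e : i + 1 + (t + 1) = (i + 1 + t) + 1 := by omega
        rw [e]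
        exact hlink _ (by omega)
      · have ht1 : t + 1 = j - i := by omega
        rw [if_neg (by omega), if_pos (by omega : t < j - i)]
        have e : i + 1 + t = j := by omega
        rw [e]
        exact hcon
    · dsimp only
      rw [if_pos (by omega : 0 < j - i), if_neg (by omega : ¬ (j - i + 1 - 1 < j - i))]
      have e : i + 1 + 0 = i + 1 := by omega
      rw [e]
      have := hlink i (by omega)
      show (c (i+1)).1 + 1 ≤ (c i).2 + 1
      linarith
  -- covering property of the chain
  have hcov' : ∀ j, j < k → ∀ x : ℝ, (c 0).1 ≤ x → x ≤ (c j).2 →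
      ∃ i, i ≤ j ∧ x ∈ Icc (c i).1 (c i).2 := by
    intro j
    induction j with
    | zero => exact fun _ x h1 h2 => ⟨0, le_refl _, h1, h2⟩
    | succ n ihn =>
      intro hlt x h1 h2
      rcases le_or_gt (c (n+1)).1 x with hx | hx
      · exact ⟨n+1, le_refl _, hx, h2⟩
      · obtain ⟨i, hi, hmm⟩ := ihn (by omega) x h1 (le_trans hx.le (hlink n hlt))
        exact ⟨i, by omega, hmm⟩
  haveI : NeZero k := ⟨by omega⟩
  haveI : Fact (1 < k) := ⟨hk2⟩
  -- the natural-number intersection characterization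
  have key : ∀ u v, u ≤ v → v < k →
      (((((↑) : ℝ → AddCircle (1:ℝ)) '' Icc (c u).1 (c u).2) ∩
        (((↑) : ℝ → AddCircle (1:ℝ)) '' Icc (c v).1 (c v).2)).Nonempty ↔
       (u = v ∨ v = u + 1 ∨ (u = 0 ∧ v = k - 1))) := by
    intro u v huv hvk
    have hu := hmem u (by omega)
    have hv := hmem v hvk
    by_cases h1 : u = v
    · subst h1
      refine iff_of_true ⟨((c u).1 : AddCircle (1:ℝ)),
        ⟨(c u).1, ⟨le_refl _, hu.2.1⟩, rfl⟩, ⟨(c u).1, ⟨le_refl _, hu.2.1⟩, rfl⟩⟩ (Or.inl rfl)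
    by_cases h2 : v = u + 1
    · subst h2
      refine iff_of_true ?_ (Or.inr (Or.inl rfl))
      refine ⟨((max (c u).1 (c (u+1)).1 : ℝ) : AddCircle (1:ℝ)),
        ⟨max (c u).1 (c (u+1)).1, ⟨le_max_left _ _, max_le hu.2.1 (hlink u (by omega))⟩, rfl⟩,
        ⟨max (c u).1 (c (u+1)).1, ⟨le_max_right _ _,
          max_le (le_trans hu.2.1 (hbmono u (by omega)).le) hv.2.1⟩, rfl⟩⟩
    by_cases h3 : u = 0 ∧ v = k - 1
    · refine iff_of_true ?_ (Or.inr (Or.inr h3))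
      obtain ⟨hu0, hvk1⟩ := h3
      subst hu0 hvk1
      have hv2 : 2 ≤ k - 1 := by
        rcases Nat.lt_or_ge (k-1) 2 with h | h
        · exfalso; apply h2; omega
        · exact h
      refine ⟨(((c 0).1 : ℝ) : AddCircle (1:ℝ)),
        ⟨(c 0).1, ⟨le_refl _, hu.2.1⟩, rfl⟩, ⟨(c 0).1 + 1, ⟨?_, hwrap⟩, ?_⟩⟩
      · -- (c (k-1)).1 ≤ (c 0).1 + 1
        have hl : (c (k-1)).1 ≤ (c (k-2)).2 := by
          have e : k - 2 + 1 = k - 1 := by omega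
          have := hlink (k-2) (by omega)
          rwa [e] at this
        have hw : (c (k-2)).2 < (c 0).1 + 1 := hwsep 0 (k-2) (by omega) (by omega) (by omega)
        linarith
      · have := coe_shift (c 0).1 1
        push_cast at this
        exact this
    · refine iff_of_false ?_ (by push_neg at h3; rcases h3 with h3; tauto)
      intro hne
      obtain ⟨m, hm1, hm2⟩ := (inter_nonempty_iff hu.2.1 hv.2.1).1 hne
      have huv2 : u + 2 ≤ v := by
        rcases Nat.lt_or_ge v (u+2) with h | h
        · exfalso
          rcases Nat.eq_or_lt_of_le huv with h' | h'
          · exact h1 h'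
          · apply h2; omega
        · exact h
      have hs := hsep u v huv2 hvk
      have hw : (c v).2 < (c u).1 + 1 := by
        apply hwsep u v (by omega) hvk
        by_cases hu0 : u = 0
        · have hvne : v ≠ k - 1 := fun hv1 => h3 ⟨hu0, hv1⟩
          omega
        · omega
      -- from hm1 : (c v).1 + m ≤ (c u).2 < (c v).1, get m ≤ -1
      have hmneg : (m:ℝ) < 0 := by linarith
      have hmneg' : m ≤ -1 := by
        have : m < 0 := by exact_mod_cast hmneg
        omega
      have : (m:ℝ) ≤ -1 := by exact_mod_cast hmneg'
      linarith
  -- translation between ZMod adjacency and natural adjacency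
  have zadj : ∀ i j : ZMod k, j = i + 1 ↔ (j.val = i.val + 1 ∨ (i.val = k - 1 ∧ j.val = 0)) := by
    intro i j
    constructor
    · rintro rfl
      rw [ZMod.val_add, ZMod.val_one]
      rcases Nat.lt_or_ge (i.val + 1) k with h | h
      · left; exact Nat.mod_eq_of_lt h
      · right
        have hv := ZMod.val_lt i
        have hie : i.val = k - 1 := by omega
        refine ⟨hie, ?_⟩
        rw [hie]
        have e : k - 1 + 1 = k := by omega
        rw [e, Nat.mod_self]
    · rintro (h | ⟨h1, h2⟩)
      · rw [← ZMod.natCast_rightInverse j, h, Nat.cast_add, Nat.cast_one,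
          ZMod.natCast_rightInverse i]
      · rw [← ZMod.natCast_rightInverse j, ← ZMod.natCast_rightInverse i, h1, h2]
        have e : ((k - 1 : ℕ) : ZMod k) + 1 = ((k - 1 + 1 : ℕ) : ZMod k) := by push_cast; ring
        rw [e]
        have e2 : k - 1 + 1 = k := by omega
        rw [e2, ZMod.natCast_self, Nat.cast_zero]
  have hvalinj : ∀ i j : ZMod k, i = j ↔ i.val = j.val := by
    intro i j
    constructor
    · rintro rfl; rfl
    · intro h; exact ZMod.natCast_rightInverse.injective h
  -- final assembly
  refine ⟨k, by omega, fun i => ((↑) : ℝ → AddCircle (1:ℝ)) '' Icc (c i.val).1 (c i.val).2,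
    fun i => (hmem i.val (ZMod.val_lt i)).1, ?_, ?_⟩
  · -- covering
    apply eq_univ_of_forall
    intro z
    rw [mem_iUnion]
    set x : ℝ := (AddCircle.equivIco 1 ((c 0).1) z : ℝ) with hxdef
    have hxmem : x ∈ Ico ((c 0).1) ((c 0).1 + 1) := (AddCircle.equivIco 1 ((c 0).1) z).2
    have hxz : ((x : ℝ) : AddCircle (1:ℝ)) = z := (AddCircle.equivIco 1 ((c 0).1)).symm_apply_apply z
    obtain ⟨i, hik, hxi⟩ := hcov' (k-1) (by omega) x hxmem.1 (by linarith [hxmem.2, hwrap])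
    refine ⟨(i : ZMod k), ?_⟩
    rw [ZMod.val_cast_of_lt (by omega : i < k)]
    exact ⟨x, hxi, hxz⟩
  · intro i j
    have hvi := ZMod.val_lt i
    have hvj := ZMod.val_lt j
    have hsub : (j = i - 1) ↔ (i = j + 1) := by
      constructor
      · intro h; rw [h]; ring
      · intro h; rw [h]; ring
    rcases le_total i.val j.val with h | h
    · rw [key i.val j.val h hvj, hsub, zadj j i, zadj i j, hvalinj j i]
      omega
    · rw [Set.inter_comm, key j.val i.val h hvi, hsub, zadj j i, zadj i j, hvalinj j i]
      omega
end

section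
/- Let G be a graph with a solution β to its Naji system, and suppose {a, b, c, d} induces a K₄ in G. If a', distinct from a, b, c, d, is a vertex adjacent to b, c, and d but not to a, and every 4-cycle within {a,b,c,d} is odd (with respect to the orientation determined by β), then every 4-cycle within {a',b,c,d} is odd. -/
/-- `{a,b,c,d}` induces a `K₄` in `G` and, with respect to `β`, each of its three
4-cycles is odd (traversing it one meets an odd number of forward arcs in the
orientation determined by `β`). -/
def IsK4Obstruction {V : Type*} (G : SimpleGraph V) (β : V → V → ZMod 2)
    (a b c d : V) : Prop :=
  G.Adj a b ∧ G.Adj a c ∧ G.Adj a d ∧ G.Adj b c ∧ G.Adj b d ∧ G.Adj c d ∧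
  β a b + β b c + β c d + β d a = 1 ∧
  β a b + β b d + β d c + β c a = 1 ∧
  β a c + β c b + β b d + β d a = 1

/-- Replacing `a` in a `K₄`-obstruction `{a,b,c,d}` by a vertex `a'` adjacent to
`b`, `c`, `d` but not to `a` yields another `K₄`-obstruction. -/
theorem naji_K4_transitive {V : Type*} (G : SimpleGraph V) (β : V → V → ZMod 2)
    (hβ : NajiSolution G β) (a b c d a' : V)
    (hobs : IsK4Obstruction G β a b c d)
    (ha'a : a' ≠ a) (ha'b : a' ≠ b) (ha'c : a' ≠ c) (ha'd : a' ≠ d)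
    (hb : G.Adj a' b) (hc : G.Adj a' c) (hd : G.Adj a' d) (hna : ¬G.Adj a' a) :
    IsK4Obstruction G β a' b c d := by
  obtain ⟨h1, _, h3⟩ := hβ
  obtain ⟨hab, hac, had, hbc, hbd, hcd, O1, O2, O3⟩ := hobs
  have h2 : (2 : ZMod 2) = 0 := by decide
  have E1 : β a b + β b a = 1 := h1 a b hab
  have E2 : β a c + β c a = 1 := h1 a c hac
  have F1 : β a' b + β b a' = 1 := h1 a' b hb
  have F2 : β a' c + β c a' = 1 := h1 a' c hc
  have Tb : β a' a + β a a' + β b a' + β b a = 1 :=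
    h3 b a' a ha'a hb.symm hab.symm hna
  have Tc : β a' a + β a a' + β c a' + β c a = 1 :=
    h3 c a' a ha'a hc.symm hac.symm hna
  have Td : β a' a + β a a' + β d a' + β d a = 1 :=
    h3 d a' a ha'a hd.symm had.symm hna
  refine ⟨hb, hc, hd, hbc, hbd, hcd, ?_, ?_, ?_⟩
  · linear_combination O1 + E1 + F1 + Tb + Td +
      (2 - β a b - β d a - β b a - β b a' - β a' a - β a a') * h2
  · linear_combination O2 + E1 + F1 + Tb + Tc +
      (2 - β a b - β c a - β b a - β b a' - β a' a - β a a') * h2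
  · linear_combination O3 + E2 + F2 + Tc + Td +
      (2 - β a c - β c a - β c a' - β a' a - β a a' - β d a) * h2
end

section
/- Let G be a graph with a Naji-system solution β, and let {a,b,c,d} induce a K₄ in G. Let P be a path in G with distinct ends a and b such that V(P) ∩ {a,b,c,d} = {a,b}, E(P) contains no edge of the K₄, and the union of P with the K₄ is an induced subgraph of G (so internal vertices of P are adjacent to no vertex of {a,b,c,d} except as along P). Then β(c,a) + β(a,d) + β(d,b) + β(b,c) = 0, i.e., the 4-cycle (a,c,b,d,a) is even. -/
private lemma naji_aux {V : Type*} {G : SimpleGraph V} {β : V → V → ZMod 2}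
    (hβ : NajiSolution G β) {c d : V} (ecd : G.Adj c d) :
    ∀ {w b : V} (q : G.Walk w b), G.Adj b c → G.Adj b d → w ≠ b →
      (∀ u ∈ q.support, u ≠ b → ¬G.Adj u c ∧ ¬G.Adj u d ∧ u ≠ c ∧ u ≠ d) →
      β c w + β d w = β b c + β b d := by
  intro w b q
  induction q with
  | nil => intro _ _ h _; exact absurd rfl h
  | @cons w y b h q ih =>
    intro ebc ebd hwb hsupp
    obtain ⟨hwc, hwd, hwc', hwd'⟩ := hsupp w (by simp) hwb
    have h20 : (2 : ZMod 2) = 0 := rfl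
    by_cases hyb : y = b
    · rw [← hyb] at ebc ebd
      have e1 := hβ.2.2 y w c hwc' h.symm ebc hwc
      have e2 := hβ.2.2 y w d hwd' h.symm ebd hwd
      have e3 := hβ.2.1 w c d hwc' hwd' ecd hwc hwd
      rw [← hyb]
      linear_combination e1 + e2 + e3 + (1 - β y c - β y d - β y w - β w c - β w d) * h20
    · obtain ⟨hyc, hyd, hyc', hyd'⟩ := hsupp y (by simp) hyb
      have e1 := hβ.2.1 c w y hwc'.symm hyc'.symm h
        (fun hx => hwc hx.symm) (fun hx => hyc hx.symm)
      have e2 := hβ.2.1 d w y hwd'.symm hyd'.symm h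
        (fun hx => hwd hx.symm) (fun hx => hyd hx.symm)
      have e3 := ih ebc ebd hyb (fun u hu hub => hsupp u (by simp [hu]) hub)
      linear_combination e1 + e2 + e3 + (-β c y - β d y) * h20

/-- If `{a,b,c,d}` induces a `K₄`, and `P` is a path from `a` to `b` of length at
least two, meeting the `K₄` only in its ends `a` and `b`, using no edge of the
`K₄`, and such that the union of `P` with the `K₄` is an induced subgraph of `G`,
then the 4-cycle `(a,c,b,d,a)` is even: `β c a + β a d + β d b + β b c = 0`. -/
theorem naji_K4_path_even {V : Type*} (G : SimpleGraph V) (β : V → V → ZMod 2)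
    (hβ : NajiSolution G β) (a b c d : V)
    (hab : a ≠ b) (hac : a ≠ c) (had : a ≠ d) (hbc : b ≠ c) (hbd : b ≠ d)
    (hcd : c ≠ d)
    (eab : G.Adj a b) (eac : G.Adj a c) (ead : G.Adj a d)
    (ebc : G.Adj b c) (ebd : G.Adj b d) (ecd : G.Adj c d)
    (p : G.Walk a b) (hp : p.IsPath) (hlen : 2 ≤ p.length)
    (hcP : c ∉ p.support) (hdP : d ∉ p.support)
    (hind : ∀ u v : V,
      (u ∈ p.support ∨ u = c ∨ u = d) → (v ∈ p.support ∨ v = c ∨ v = d) →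
      (G.Adj u v ↔ (s(u, v) ∈ p.edges ∨
        (u ∈ ({a, b, c, d} : Set V) ∧ v ∈ ({a, b, c, d} : Set V) ∧ u ≠ v)))) :
    β c a + β a d + β d b + β b c = 0 := by
  cases p with
  | nil => simp at hlen
  | @cons a x _ h q =>
    rw [SimpleGraph.Walk.cons_isPath_iff] at hp
    obtain ⟨hq, haq⟩ := hp
    have hxa : x ≠ a := fun hxa => haq (hxa ▸ q.start_mem_support)
    have hxb : x ≠ b := by
      intro hxb
      subst hxb
      rw [SimpleGraph.Walk.isPath_iff_eq_nil] at hq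
      subst hq
      simp at hlen
    -- internal vertices facts
    have key : ∀ u ∈ q.support, u ≠ b →
        ¬G.Adj u c ∧ ¬G.Adj u d ∧ u ≠ c ∧ u ≠ d := by
      intro u hu hub
      have hup : u ∈ (SimpleGraph.Walk.cons h q).support := by
        simp [SimpleGraph.Walk.support_cons, hu]
      have hua : u ≠ a := fun h' => haq (h' ▸ hu)
      have huc : u ≠ c := fun h' => hcP (h' ▸ hup)
      have hud : u ≠ d := fun h' => hdP (h' ▸ hup)
      refine ⟨?_, ?_, huc, hud⟩
      · intro hadj
        rw [hind u c (Or.inl hup) (Or.inr (Or.inl rfl))] at hadj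
        rcases hadj with he | ⟨hu4, _, _⟩
        · exact hcP ((SimpleGraph.Walk.cons h q).snd_mem_support_of_mem_edges he)
        · simp only [Set.mem_insert_iff, Set.mem_singleton_iff] at hu4
          rcases hu4 with h' | h' | h' | h' <;> [exact hua h'; exact hub h';
            exact huc h'; exact hud h']
      · intro hadj
        rw [hind u d (Or.inl hup) (Or.inr (Or.inr rfl))] at hadj
        rcases hadj with he | ⟨hu4, _, _⟩
        · exact hdP ((SimpleGraph.Walk.cons h q).snd_mem_support_of_mem_edges he)
        · simp only [Set.mem_insert_iff, Set.mem_singleton_iff] at hu4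
          rcases hu4 with h' | h' | h' | h' <;> [exact hua h'; exact hub h';
            exact huc h'; exact hud h']
    have hxq : x ∈ q.support := q.start_mem_support
    obtain ⟨hxc, hxd, hxc', hxd'⟩ := key x hxq hxb
    -- a-side: apply aux to the single-edge walk x → a
    have h1 := naji_aux hβ ecd
      (SimpleGraph.Walk.cons h.symm SimpleGraph.Walk.nil) eac ead hxa ?_
    · -- b-side
      have h2 := naji_aux hβ ecd q ebc ebd hxb key
      have h3 := hβ.1 a c eac
      have h4 := hβ.1 b d ebd
      have h20 : (2 : ZMod 2) = 0 := rfl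
      linear_combination h3 + h4 + h1 - h2 + (1 + β a d - β b d) * h20
    · intro u hu hua
      simp only [SimpleGraph.Walk.support_cons, SimpleGraph.Walk.support_nil,
        List.mem_cons, List.mem_singleton] at hu
      rcases hu with rfl | rfl | h'
      · exact ⟨hxc, hxd, hxc', hxd'⟩
      · exact absurd rfl hua
      · simp at h'
end

section
/- Let G be a graph with a Naji-system solution β containing an induced claw {x,a,b,c} (center x) which is a Claw-obstruction, i.e., β(a,b)+β(a,c) = β(b,a)+β(b,c) = β(c,a)+β(c,b) = 1. Let X = N(a) ∩ N(b) ∩ N(c). If d is a vertex lying in the same component of G − X as one of a, b, c, and d has at least one neighbour in X, then every vertex of X is a neighbour of d. -/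
namespace NajiClawAux

lemma z2_eq : ∀ x y : ZMod 2, x + y = 0 → x = y := by decide

lemma z2_ne : ∀ x y : ZMod 2, x = y → x + y = 1 → False := by decide

lemma chain {V : Type*} {G : SimpleGraph V} {β : V → V → ZMod 2}
    (hβ : NajiSolution G β) (t : V) {u v : V} (p : G.Walk u v)
    (h : ∀ y ∈ p.support, t ≠ y ∧ ¬G.Adj t y) : β t u = β t v := by
  induction p with
  | nil => rfl
  | @cons u w v huw q ih =>
    have hu := h u (by simp)
    have hw := h w (by
      rw [SimpleGraph.Walk.support_cons]
      exact List.mem_cons_of_mem _ q.start_mem_support)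
    have e := hβ.2.1 t u w hu.1 hw.1 huw hu.2 hw.2
    rw [z2_eq _ _ e]
    exact ih (fun y hy => h y (by
      rw [SimpleGraph.Walk.support_cons]; exact List.mem_cons_of_mem _ hy))

lemma nowalk {V : Type*} {G : SimpleGraph V} {β : V → V → ZMod 2}
    (hβ : NajiSolution G β) :
    ∀ n : ℕ, ∀ a b c : V, a ≠ b → a ≠ c → b ≠ c →
      ¬G.Adj a b → ¬G.Adj b c → ¬G.Adj c a →
      β a b + β a c = 1 → β b a + β b c = 1 → β c a + β c b = 1 →
      ∀ p : G.Walk a b,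
        (∀ y ∈ p.support, ¬(G.Adj y a ∧ G.Adj y b ∧ G.Adj y c)) →
        p.length ≤ n → False := by
  intro n
  induction n using Nat.strong_induction_on with
  | _ n IH =>
  intro a b c hab hac hbc nab nbc nca oA oB oC p havoid hlen
  classical
  by_cases hbad : ∃ y ∈ p.support, y = c ∨ G.Adj c y
  · obtain ⟨y, hy, hcase⟩ := hbad
    have hn2 : 2 ≤ p.length := by
      by_contra hlt
      have : p.length = 0 ∨ p.length = 1 := by omega
      rcases this with h0 | h1
      · exact hab (SimpleGraph.Walk.eq_of_length_eq_zero h0)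
      · exact nab (SimpleGraph.Walk.adj_of_length_eq_one h1)
    have hsplit : (p.takeUntil y hy).append (p.dropUntil y hy) = p := p.take_spec hy
    have hlensum : (p.takeUntil y hy).length + (p.dropUntil y hy).length = p.length := by
      conv_rhs => rw [← hsplit]
      rw [SimpleGraph.Walk.length_append]
    rcases hcase with rfl | hadj
    · -- y = c : cut at c
      have hq2 : 2 ≤ (p.takeUntil y hy).length := by
        by_contra hlt
        have : (p.takeUntil y hy).length = 0 ∨ (p.takeUntil y hy).length = 1 := by omega
        rcases this with h0 | h1
        · exact hac (SimpleGraph.Walk.eq_of_length_eq_zero h0)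
        · exact nca (SimpleGraph.Walk.adj_of_length_eq_one h1).symm
      have hr2 : 2 ≤ (p.dropUntil y hy).length := by
        by_contra hlt
        have : (p.dropUntil y hy).length = 0 ∨ (p.dropUntil y hy).length = 1 := by omega
        rcases this with h0 | h1
        · exact hbc (SimpleGraph.Walk.eq_of_length_eq_zero h0).symm
        · exact nbc (SimpleGraph.Walk.adj_of_length_eq_one h1).symm
      refine IH (p.takeUntil y hy).length (by omega) a y b hac hab (Ne.symm hbc)
        (fun h => nca h.symm) (fun h => nbc h.symm) (fun h => nab h.symm)
        (by rw [add_comm]; exact oA) oC oB (p.takeUntil y hy) ?_ le_rfl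
      intro y' hy'
      have := havoid y' (p.support_takeUntil_subset hy hy')
      tauto
    · -- c adjacent to y
      by_cases hc1 : (p.takeUntil y hy).length + 1 < n
      · refine IH ((p.takeUntil y hy).length + 1) hc1 a c b hac hab (Ne.symm hbc)
          (fun h => nca h.symm) (fun h => nbc h.symm) (fun h => nab h.symm)
          (by rw [add_comm]; exact oA) oC oB
          ((p.takeUntil y hy).concat hadj.symm) ?_ (by rw [SimpleGraph.Walk.length_concat])
        intro y' hy'
        rw [SimpleGraph.Walk.support_concat, List.mem_append] at hy'
        rcases hy' with hy' | hy'
        · have := havoid y' (p.support_takeUntil_subset hy hy')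
          tauto
        · simp only [List.mem_singleton] at hy'
          subst hy'
          exact fun h => G.irrefl h.2.1
      · by_cases hc2 : (p.dropUntil y hy).length + 1 < n
        · refine IH ((p.dropUntil y hy).length + 1) hc2 c b a (Ne.symm hbc) (Ne.symm hac)
            (Ne.symm hab)
            (fun h => nbc h.symm) (fun h => nab h.symm) (fun h => nca h.symm)
            (by rw [add_comm]; exact oC) (by rw [add_comm]; exact oB)
            (by rw [add_comm]; exact oA)
            (SimpleGraph.Walk.cons hadj (p.dropUntil y hy)) ?_
            (by rw [SimpleGraph.Walk.length_cons])
          intro y' hy'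
          rw [SimpleGraph.Walk.support_cons] at hy'
          rcases hy' with _ | ⟨_, hy'⟩
          · exact fun h => G.irrefl h.1
          · have := havoid y' (p.support_dropUntil_subset hy hy')
            tauto
        · -- middle vertex of a length-2 walk: it is in X, contradiction
          have hlq : (p.takeUntil y hy).length = 1 ∧ (p.dropUntil y hy).length = 1 := by
            omega
          have hay : G.Adj a y := SimpleGraph.Walk.adj_of_length_eq_one hlq.1
          have hyb : G.Adj y b := SimpleGraph.Walk.adj_of_length_eq_one hlq.2
          exact havoid y hy ⟨hay.symm, hyb, hadj.symm⟩
  · push_neg at hbad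
    have hc := chain hβ c p (fun y hy => ⟨fun h => (hbad y hy).1 h.symm, (hbad y hy).2⟩)
    exact z2_ne _ _ hc oC

lemma main_aux {V : Type*} {G : SimpleGraph V} {β : V → V → ZMod 2}
    (hβ : NajiSolution G β) (a b c d z z' : V)
    (hab : a ≠ b) (hac : a ≠ c) (hbc : b ≠ c)
    (nab : ¬G.Adj a b) (nbc : ¬G.Adj b c) (nca : ¬G.Adj c a)
    (oA : β a b + β a c = 1) (oB : β b a + β b c = 1) (oC : β c a + β c b = 1)
    (p : G.Walk a d)
    (havoid : ∀ y ∈ p.support, ¬(G.Adj y a ∧ G.Adj y b ∧ G.Adj y c))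
    (hz : G.Adj z a ∧ G.Adj z b ∧ G.Adj z c) (hdz : G.Adj d z)
    (hz' : G.Adj z' a ∧ G.Adj z' b ∧ G.Adj z' c) (hdz' : ¬G.Adj d z') : False := by
  haveI : DecidableEq V := Classical.decEq V
  -- b is not on, nor adjacent to, the support of p
  have hbsup : ∀ y ∈ p.support, b ≠ y ∧ ¬G.Adj b y := by
    intro y hy
    constructor
    · rintro rfl
      exact nowalk hβ (p.takeUntil b hy).length a b c hab hac hbc nab nbc nca oA oB oC
        (p.takeUntil b hy)
        (fun y' hy' => havoid y' (p.support_takeUntil_subset hy hy')) le_rfl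
    · intro hAdj
      refine nowalk hβ ((p.takeUntil y hy).length + 1) a b c hab hac hbc nab nbc nca
        oA oB oC ((p.takeUntil y hy).concat hAdj.symm) ?_ (by rw [SimpleGraph.Walk.length_concat])
      intro y' hy'
      rw [SimpleGraph.Walk.support_concat, List.mem_append] at hy'
      rcases hy' with hy' | hy'
      · exact havoid y' (p.support_takeUntil_subset hy hy')
      · simp only [List.mem_singleton] at hy'
        subst hy'
        exact fun h => G.irrefl h.2.1
  have hcsup : ∀ y ∈ p.support, c ≠ y ∧ ¬G.Adj c y := by
    intro y hy
    constructor
    · rintro rfl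
      refine nowalk hβ (p.takeUntil c hy).length a c b hac hab (Ne.symm hbc)
        (fun h => nca h.symm) (fun h => nbc h.symm) (fun h => nab h.symm)
        (by rw [add_comm]; exact oA) oC oB (p.takeUntil c hy) ?_ le_rfl
      intro y' hy'
      have := havoid y' (p.support_takeUntil_subset hy hy')
      tauto
    · intro hAdj
      refine nowalk hβ ((p.takeUntil y hy).length + 1) a c b hac hab (Ne.symm hbc)
        (fun h => nca h.symm) (fun h => nbc h.symm) (fun h => nab h.symm)
        (by rw [add_comm]; exact oA) oC oB ((p.takeUntil y hy).concat hAdj.symm) ?_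
        (by rw [SimpleGraph.Walk.length_concat])
      intro y' hy'
      rw [SimpleGraph.Walk.support_concat, List.mem_append] at hy'
      rcases hy' with hy' | hy'
      · have := havoid y' (p.support_takeUntil_subset hy hy')
        tauto
      · simp only [List.mem_singleton] at hy'
        subst hy'
        exact fun h => G.irrefl h.2.1
  have hdsup := p.end_mem_support
  have hdb : ¬G.Adj d b := fun h => (hbsup d hdsup).2 h.symm
  have hdbne : d ≠ b := fun h => (hbsup d hdsup).1 h.symm
  have hdc : ¬G.Adj d c := fun h => (hcsup d hdsup).2 h.symm
  have hdcne : d ≠ c := fun h => (hcsup d hdsup).1 h.symm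
  have hdX := havoid d hdsup
  have hdz'ne : d ≠ z' := by rintro rfl; exact hdX hz'
  have cb : β b a = β b d := chain hβ b p hbsup
  have cc : β c a = β c d := chain hβ c p hcsup
  have e1 := hβ.2.2 z d b hdbne hdz.symm hz.2.1 hdb
  have e2 := hβ.2.2 z d c hdcne hdz.symm hz.2.2 hdc
  have e3 := hβ.2.2 z b c hbc hz.2.1 hz.2.2 nbc
  have e4 := hβ.2.1 d z' b hdz'ne hdbne hz'.2.1 hdz' hdb
  have e5 := hβ.2.1 d z' c hdz'ne hdcne hz'.2.2 hdz' hdc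
  have h2 : (2 : ZMod 2) = 0 := by decide
  have key : (1 : ZMod 2) = 0 := by
    linear_combination e1 + e2 + e3 + e4 + e5 + oB + oC - cb - cc +
      (3 - β d b - β b d - β d c - β c d - β z d - β z b - β z c - β b c - β c b - β d z') * h2
  exact one_ne_zero key
end NajiClawAux

/-- Let `{x,a,b,c}` be a Claw-obstruction with centre `x`, and let
`X = N(a) ∩ N(b) ∩ N(c)`.  If a vertex `d` lies in the same component of
`G − X` as one of `a`, `b`, `c` (i.e. is joined to one of them by a walk
avoiding `X`) and `d` has a neighbour in `X`, then `X ⊆ N(d)`. -/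
theorem naji_claw_dominating {V : Type*} (G : SimpleGraph V) (β : V → V → ZMod 2)
    (hβ : NajiSolution G β) (x a b c d : V)
    (hab : a ≠ b) (hac : a ≠ c) (hbc : b ≠ c)
    (hxa : G.Adj x a) (hxb : G.Adj x b) (hxc : G.Adj x c)
    (nab : ¬G.Adj a b) (nbc : ¬G.Adj b c) (nca : ¬G.Adj c a)
    (hobs : β a b + β a c = 1 ∧ β b a + β b c = 1 ∧ β c a + β c b = 1)
    (hcomp :
      (∃ p : G.Walk a d, ∀ y ∈ p.support, ¬(G.Adj y a ∧ G.Adj y b ∧ G.Adj y c)) ∨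
      (∃ p : G.Walk b d, ∀ y ∈ p.support, ¬(G.Adj y a ∧ G.Adj y b ∧ G.Adj y c)) ∨
      (∃ p : G.Walk c d, ∀ y ∈ p.support, ¬(G.Adj y a ∧ G.Adj y b ∧ G.Adj y c)))
    (hnbr : ∃ x' : V, (G.Adj x' a ∧ G.Adj x' b ∧ G.Adj x' c) ∧ G.Adj d x') :
    ∀ x' : V, (G.Adj x' a ∧ G.Adj x' b ∧ G.Adj x' c) → G.Adj d x' := by
  intro x' hx'
  by_contra hnot
  obtain ⟨z, hz, hdz⟩ := hnbr
  rcases hcomp with ⟨p, hp⟩ | ⟨p, hp⟩ | ⟨p, hp⟩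
  · exact NajiClawAux.main_aux hβ a b c d z x' hab hac hbc nab nbc nca
      hobs.1 hobs.2.1 hobs.2.2 p hp hz hdz hx' hnot
  · exact NajiClawAux.main_aux hβ b a c d z x' (Ne.symm hab) hbc hac
      (fun h => nab h.symm) (fun h => nca h.symm) (fun h => nbc h.symm)
      hobs.2.1 hobs.1 (by rw [add_comm]; exact hobs.2.2) p
      (fun y hy => by have := hp y hy; tauto)
      ⟨hz.2.1, hz.1, hz.2.2⟩ hdz ⟨hx'.2.1, hx'.1, hx'.2.2⟩ hnot
  · exact NajiClawAux.main_aux hβ c a b d z x' (Ne.symm hac) (Ne.symm hbc) hab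
      nca nab nbc hobs.2.2 (by rw [add_comm]; exact hobs.1) (by rw [add_comm]; exact hobs.2.1) p
      (fun y hy => by have := hp y hy; tauto)
      ⟨hz.2.2, hz.1, hz.2.1⟩ hdz ⟨hx'.2.2, hx'.1, hx'.2.1⟩ hnot
end

section
/- Let G be a graph with a Naji-system solution β, and suppose G contains a Claw-obstruction H = G[{x,a,b,c}] (center x, with β(a,b)+β(a,c) = β(b,a)+β(b,c) = β(c,a)+β(c,b) = 1). Then for each split (A, B) of H, there is a split (A', B') of G with A ⊆ A' and B ⊆ B'. -/
/-- `(X, Y)` is a split of `G`: a partition of the vertex set into two parts of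
size at least two such that the edges between `X` and `Y` form a complete
bipartite graph. -/
def IsSplit {V : Type*} (G : SimpleGraph V) (X Y : Set V) : Prop :=
  X ∪ Y = Set.univ ∧ Disjoint X Y ∧ X.Nontrivial ∧ Y.Nontrivial ∧
  ∀ x₁ ∈ X, ∀ x₂ ∈ X, ∀ y₁ ∈ Y, ∀ y₂ ∈ Y,
    G.Adj x₁ y₁ → G.Adj x₂ y₂ → G.Adj x₁ y₂

/- ### Auxiliary lemmas -/

private lemma isSplit_symm {V : Type*} {G : SimpleGraph V} {X Y : Set V}
    (h : IsSplit G X Y) : IsSplit G Y X := by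
  obtain ⟨hu, hd, hX, hY, hbip⟩ := h
  refine ⟨by rw [Set.union_comm]; exact hu, hd.symm, hY, hX, ?_⟩
  intro y₁ hy₁ y₂ hy₂ x₁ hx₁ x₂ hx₂ h₁ h₂
  exact (hbip x₂ hx₂ x₁ hx₁ y₂ hy₂ y₁ hy₁ h₂.symm h₁.symm).symm

private lemma zmod2_aux1 : ∀ p q r s : ZMod 2, p + q = 0 → q + r = 0 → p = s →
    r + s = 1 → False := by decide

private lemma zmod2_aux2 : ∀ p q r : ZMod 2, p + q = 0 → p + r = 0 → q + r = 1 →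
    False := by decide

private lemma zmod2_aux3 : ∀ p q : ZMod 2, p = q → p + q = 1 → False := by decide

private lemma zmod2_aux3' : ∀ p q : ZMod 2, p = q → q + p = 1 → False := by decide

private lemma zmod2_eq : ∀ p q r : ZMod 2, p + q = 0 → p = r → q = r := by decide

/-- The invariant carried along paths avoiding `K` starting at `b` (for claw-obstruction
with leaves `a`, `b`, `c`). -/
private def ClawInv {V : Type*} (G : SimpleGraph V) (β : V → V → ZMod 2)
    (a b c : V) (K : Set V) (u : V) : Prop :=
  u ∉ K ∧ ¬G.Adj a u ∧ ¬G.Adj c u ∧ β a u = β a b ∧ β c u = β c b ∧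
    ∀ w ∈ K, (G.Adj u w ↔ β u a + β u c = 1)

set_option maxHeartbeats 1000000 in
set_option synthInstance.maxHeartbeats 0 in
set_option synthInstance.maxSize 2000 in
private lemma zmod2_dich : ∀ va av wv wa vc cv wc ab ba wb cb bc : ZMod 2,
    va + av + wv + wa = 1 → vc + cv + wv + wc = 1 →
    ab + ba + wa + wb = 1 → cb + bc + wc + wb = 1 →
    ba + bc = 1 → av = ab → cv = cb → va + vc = 1 := by decide

private lemma clawInv_step {V : Type*} {G : SimpleGraph V} {β : V → V → ZMod 2}
    (hβ : NajiSolution G β) {a b c : V}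
    (hab : a ≠ b) (hac : a ≠ c) (hbc : b ≠ c)
    (nab : ¬G.Adj a b) (nbc : ¬G.Adj b c) (nca : ¬G.Adj c a)
    (o1 : β a b + β a c = 1) (o2 : β b a + β b c = 1) (o3 : β c a + β c b = 1)
    {K : Set V} (hK : ∀ w, w ∈ K ↔ G.Adj a w ∧ G.Adj b w ∧ G.Adj c w)
    {u v : V} (hu : ClawInv G β a b c K u) (huv : G.Adj u v) (hvK : v ∉ K) :
    ClawInv G β a b c K v := by
  obtain ⟨_, h2, h3⟩ := hβ
  obtain ⟨huK, hau, hcu, hβau, hβcu, _⟩ := hu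
  have o1' : β a c + β a b = 1 := by rwa [add_comm] at o1
  have o3' : β c b + β c a = 1 := by rwa [add_comm] at o3
  have hua : u ≠ a := by rintro rfl; exact zmod2_aux3 _ _ hβcu o3
  have huc : u ≠ c := by rintro rfl; exact zmod2_aux3' _ _ hβau o1
  have hva : v ≠ a := by rintro rfl; exact hau huv.symm
  have hvc : v ≠ c := by rintro rfl; exact hcu huv.symm
  -- v is not adjacent to a
  have hav : ¬G.Adj a v := by
    intro hav
    have hvb : v ≠ b := by rintro rfl; exact nab hav
    have hcv : ¬G.Adj c v := by
      intro hcv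
      have hbv : G.Adj b v := by
        by_contra hbv
        have e1 := h2 b v a hvb.symm hab.symm hav.symm hbv (fun h => nab h.symm)
        have e2 := h2 b v c hvb.symm hbc hcv.symm hbv nbc
        exact zmod2_aux2 _ _ _ e1 e2 o2
      exact hvK ((hK v).mpr ⟨hav, hbv, hcv⟩)
    have e1 := h2 c u v huc.symm hvc.symm huv hcu hcv
    have e2 := h2 c v a hvc.symm hac.symm hav.symm hcv nca
    exact zmod2_aux1 _ _ _ _ e1 e2 hβcu o3
  -- v is not adjacent to c
  have hcv : ¬G.Adj c v := by
    intro hcv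
    have e1 := h2 a u v hua.symm hva.symm huv hau hav
    have e2 := h2 a v c hva.symm hac hcv.symm hav (fun h => nca h.symm)
    exact zmod2_aux1 _ _ _ _ e1 e2 hβau o1'
  -- β propagation
  have hβav : β a v = β a b :=
    zmod2_eq _ _ _ (h2 a u v hua.symm hva.symm huv hau hav) hβau
  have hβcv : β c v = β c b :=
    zmod2_eq _ _ _ (h2 c u v huc.symm hvc.symm huv hcu hcv) hβcu
  refine ⟨hvK, hav, hcv, hβav, hβcv, ?_⟩
  intro w hw
  obtain ⟨haw, hbw, hcw⟩ := (hK w).mp hw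
  have hvw : v ≠ w := fun h => hvK (h ▸ hw)
  constructor
  · intro hadj
    have E1 := h3 w v a hva hadj.symm haw.symm (fun h => hav h.symm)
    have E2 := h3 w v c hvc hadj.symm hcw.symm (fun h => hcv h.symm)
    have E3 := h3 w a b hab haw.symm hbw.symm nab
    have E4 := h3 w c b hbc.symm hcw.symm hbw.symm (fun h => nbc h.symm)
    exact zmod2_dich _ _ _ _ _ _ _ _ _ _ _ _ E1 E2 E3 E4 o2 hβav hβcv
  · intro hsum
    by_contra hnvw
    have F1 := h2 v w a hvw hva haw.symm hnvw (fun h => hav h.symm)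
    have F2 := h2 v w c hvw hvc hcw.symm hnvw (fun h => hcv h.symm)
    exact zmod2_aux2 _ _ _ F1 F2 hsum

private lemma clawInv_base {V : Type*} {G : SimpleGraph V} {β : V → V → ZMod 2}
    {a b c : V}
    (nab : ¬G.Adj a b) (nbc : ¬G.Adj b c)
    (o2 : β b a + β b c = 1)
    {K : Set V} (hK : ∀ w, w ∈ K ↔ G.Adj a w ∧ G.Adj b w ∧ G.Adj c w) :
    ClawInv G β a b c K b := by
  refine ⟨fun h => G.irrefl ((hK b).mp h).2.1, nab, fun h => nbc h.symm, rfl, rfl, ?_⟩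
  intro w hw
  exact ⟨fun _ => o2, fun _ => ((hK w).mp hw).2.1⟩

private lemma third_fourth {V : Type*} {A B : Set V} {u₁ u₂ u₃ u₄ : V}
    (hAB : Disjoint A B) (hB : B.Nontrivial)
    (hcov : ∀ p ∈ B, p = u₁ ∨ p = u₂ ∨ p = u₃ ∨ p = u₄)
    (h1 : u₁ ∈ A) (h2 : u₂ ∈ A) : u₃ ∈ B ∧ u₄ ∈ B := by
  obtain ⟨p, hp, q, hq, hpq⟩ := hB
  have hu1 : u₁ ∉ B := Set.disjoint_left.mp hAB h1
  have hu2 : u₂ ∉ B := Set.disjoint_left.mp hAB h2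
  have hp' : p = u₃ ∨ p = u₄ := by
    rcases hcov p hp with h | h | h | h
    · exact absurd (h ▸ hp) hu1
    · exact absurd (h ▸ hp) hu2
    · exact Or.inl h
    · exact Or.inr h
  have hq' : q = u₃ ∨ q = u₄ := by
    rcases hcov q hq with h | h | h | h
    · exact absurd (h ▸ hq) hu1
    · exact absurd (h ▸ hq) hu2
    · exact Or.inl h
    · exact Or.inr h
  rcases hp' with rfl | rfl <;> rcases hq' with rfl | rfl
  · exact absurd rfl hpq
  · exact ⟨hp, hq⟩
  · exact ⟨hq, hp⟩
  · exact absurd rfl hpq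

/-- The core construction: a claw obstruction yields a split of `G` with `x, a`
on one side and `b, c` on the other. -/
private lemma claw_core {V : Type*} (G : SimpleGraph V) (β : V → V → ZMod 2)
    (hβ : NajiSolution G β) (x a b c : V)
    (hab : a ≠ b) (hac : a ≠ c) (hbc : b ≠ c)
    (hxa : G.Adj x a) (hxb : G.Adj x b) (hxc : G.Adj x c)
    (nab : ¬G.Adj a b) (nbc : ¬G.Adj b c) (nca : ¬G.Adj c a)
    (o1 : β a b + β a c = 1) (o2 : β b a + β b c = 1) (o3 : β c a + β c b = 1) :
    ∃ A' B' : Set V, IsSplit G A' B' ∧ x ∈ A' ∧ a ∈ A' ∧ b ∈ B' ∧ c ∈ B' := by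
  classical
  set K : Set V := {w | G.Adj a w ∧ G.Adj b w ∧ G.Adj c w} with hKdef
  have hK : ∀ w, w ∈ K ↔ G.Adj a w ∧ G.Adj b w ∧ G.Adj c w := fun w => Iff.rfl
  have hK' : ∀ w, w ∈ K ↔ G.Adj a w ∧ G.Adj c w ∧ G.Adj b w := by
    intro w; rw [hK]; tauto
  set r : V → V → Prop := fun u v => G.Adj u v ∧ v ∉ K with hrdef
  set Bs : Set V := {v | Relation.ReflTransGen r b v ∨ Relation.ReflTransGen r c v}
    with hBdef
  -- invariants
  have invb : ∀ v, Relation.ReflTransGen r b v → ClawInv G β a b c K v := by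
    intro v h
    induction h with
    | refl => exact clawInv_base nab nbc o2 hK
    | tail _ hstep ih =>
        exact clawInv_step hβ hab hac hbc nab nbc nca o1 o2 o3 hK ih hstep.1 hstep.2
  have invc : ∀ v, Relation.ReflTransGen r c v → ClawInv G β a c b K v := by
    intro v h
    induction h with
    | refl => exact clawInv_base (fun h => nca h.symm) (fun h => nbc h.symm) o3 hK'
    | tail _ hstep ih =>
        exact clawInv_step hβ hac hab hbc.symm (fun h => nca h.symm)
          (fun h => nbc h.symm) (fun h => nab h.symm)
          (by rwa [add_comm] at o1) o3 o2 hK' ih hstep.1 hstep.2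
  have hBsK : ∀ v ∈ Bs, v ∉ K := by
    rintro v (h | h)
    · exact (invb v h).1
    · exact (invc v h).1
  have hdich : ∀ v ∈ Bs, ∀ w₁ ∈ K, ∀ w₂ ∈ K, G.Adj v w₁ → G.Adj v w₂ := by
    rintro v (h | h) w₁ hw₁ w₂ hw₂ hadj
    · exact ((invb v h).2.2.2.2.2 w₂ hw₂).mpr (((invb v h).2.2.2.2.2 w₁ hw₁).mp hadj)
    · exact ((invc v h).2.2.2.2.2 w₂ hw₂).mpr (((invc v h).2.2.2.2.2 w₁ hw₁).mp hadj)
  have hxK : x ∈ K := (hK x).mpr ⟨hxa.symm, hxb.symm, hxc.symm⟩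
  have hxBs : x ∉ Bs := fun h => hBsK x h hxK
  have haBs : a ∉ Bs := by
    rintro (h | h)
    · exact zmod2_aux3 _ _ (invb a h).2.2.2.2.1 o3
    · exact zmod2_aux3 _ _ (invc a h).2.2.2.2.1 o2
  have hclosed : ∀ v ∈ Bs, ∀ w, G.Adj v w → w ∉ Bs → w ∈ K := by
    intro v hv w hadj hw
    by_contra hwK
    rcases hv with h | h
    · exact hw (Or.inl (h.tail ⟨hadj, hwK⟩))
    · exact hw (Or.inr (h.tail ⟨hadj, hwK⟩))
  refine ⟨Bsᶜ, Bs, ⟨?_, ?_, ?_, ?_, ?_⟩, hxBs, haBs, Or.inl .refl, Or.inr .refl⟩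
  · exact Set.compl_union_self Bs
  · exact disjoint_compl_left
  · exact ⟨x, hxBs, a, haBs, hxa.ne⟩
  · exact ⟨b, Or.inl .refl, c, Or.inr .refl, hbc⟩
  · intro x₁ hx₁ x₂ hx₂ y₁ hy₁ y₂ hy₂ h₁ h₂
    have hx₁K : x₁ ∈ K := hclosed y₁ hy₁ x₁ h₁.symm hx₁
    have hx₂K : x₂ ∈ K := hclosed y₂ hy₂ x₂ h₂.symm hx₂
    exact (hdich y₂ hy₂ x₂ hx₂K x₁ hx₁K h₂.symm).symm

/-- Every split of a Claw-obstruction `H = G[{x,a,b,c}]` induces a split of `G`. -/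
theorem naji_claw_split {V : Type*} (G : SimpleGraph V) (β : V → V → ZMod 2)
    (hβ : NajiSolution G β) (x a b c : V)
    (hab : a ≠ b) (hac : a ≠ c) (hbc : b ≠ c)
    (hxa : G.Adj x a) (hxb : G.Adj x b) (hxc : G.Adj x c)
    (nab : ¬G.Adj a b) (nbc : ¬G.Adj b c) (nca : ¬G.Adj c a)
    (hobs : β a b + β a c = 1 ∧ β b a + β b c = 1 ∧ β c a + β c b = 1)
    (A B : Set V)
    (hpart : A ∪ B = ({x, a, b, c} : Set V)) (hAB : Disjoint A B)
    (hA : A.Nontrivial) (hB : B.Nontrivial)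
    (hbip : ∀ u₁ ∈ A, ∀ u₂ ∈ A, ∀ w₁ ∈ B, ∀ w₂ ∈ B,
      G.Adj u₁ w₁ → G.Adj u₂ w₂ → G.Adj u₁ w₂) :
    ∃ A' B' : Set V, IsSplit G A' B' ∧ A ⊆ A' ∧ B ⊆ B' := by
  obtain ⟨o1, o2, o3⟩ := hobs
  have hmem : ∀ v, v ∈ A ∪ B → v = x ∨ v = a ∨ v = b ∨ v = c := by
    intro v hv
    have : v ∈ ({x, a, b, c} : Set V) := hpart ▸ hv
    simpa using this
  have hmemA : ∀ v ∈ A, v = x ∨ v = a ∨ v = b ∨ v = c :=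
    fun v hv => hmem v (Set.mem_union_left _ hv)
  have hmemB : ∀ v ∈ B, v = x ∨ v = a ∨ v = b ∨ v = c :=
    fun v hv => hmem v (Set.mem_union_right _ hv)
  have hxAB : x ∈ A ∪ B := by rw [hpart]; simp
  have haAB : a ∈ A ∪ B := by rw [hpart]; simp
  have hbAB : b ∈ A ∪ B := by rw [hpart]; simp
  have hcAB : c ∈ A ∪ B := by rw [hpart]; simp
  -- helper: build the final answer from placements
  have finish : ∀ (A' B' : Set V), IsSplit G A' B' →
      x ∈ A' → a ∈ A' → b ∈ B' → c ∈ B' →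
      (x ∈ A → a ∈ A → b ∈ B → c ∈ B → ∃ A' B', IsSplit G A' B' ∧ A ⊆ A' ∧ B ⊆ B') := by
    intro A' B' hsplit hx' ha' hb' hc' hxA haA hbB hcB
    refine ⟨A', B', hsplit, ?_, ?_⟩
    · intro v hv
      rcases hmemA v hv with rfl | rfl | rfl | rfl
      · exact hx'
      · exact ha'
      · exact absurd hv (Set.disjoint_right.mp hAB hbB)
      · exact absurd hv (Set.disjoint_right.mp hAB hcB)
    · intro v hv
      rcases hmemB v hv with rfl | rfl | rfl | rfl
      · exact absurd hv (Set.disjoint_left.mp hAB hxA)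
      · exact absurd hv (Set.disjoint_left.mp hAB haA)
      · exact hb'
      · exact hc'
  have hxa' : x ≠ a := hxa.ne
  have hxb' : x ≠ b := hxb.ne
  have hxc' : x ≠ c := hxc.ne
  rcases hxAB with hxA | hxB
  · -- x ∈ A; find its partner
    rcases haAB with haA | haB
    · -- partner a : b, c ∈ B
      obtain ⟨hbB, hcB⟩ := third_fourth (u₃ := b) (u₄ := c) hAB hB
        (fun p hp => by rcases hmemB p hp with h|h|h|h <;> tauto) hxA haA
      obtain ⟨A', B', hsplit, h1, h2, h3, h4⟩ :=
        claw_core G β hβ x a b c hab hac hbc hxa hxb hxc nab nbc nca o1 o2 o3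
      exact finish A' B' hsplit h1 h2 h3 h4 hxA haA hbB hcB
    · rcases hbAB with hbA | hbB
      · -- partner b : a, c ∈ B
        obtain ⟨haB', hcB⟩ := third_fourth (u₃ := a) (u₄ := c) hAB hB
          (fun p hp => by rcases hmemB p hp with h|h|h|h <;> tauto) hxA hbA
        obtain ⟨A', B', hsplit, h1, h2, h3, h4⟩ :=
          claw_core G β hβ x b a c hab.symm hbc (hac)
            hxb hxa hxc (fun h => nab h.symm) (fun h => nca h.symm) (fun h => nbc h.symm)
            o2 o1 (by rwa [add_comm] at o3)
        -- split has x,b ∈ A'; a,c ∈ B'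
        refine ⟨A', B', hsplit, ?_, ?_⟩
        · intro v hv
          rcases hmemA v hv with rfl | rfl | rfl | rfl
          · exact h1
          · exact absurd hv (Set.disjoint_right.mp hAB haB')
          · exact h2
          · exact absurd hv (Set.disjoint_right.mp hAB hcB)
        · intro v hv
          rcases hmemB v hv with rfl | rfl | rfl | rfl
          · exact absurd hv (Set.disjoint_left.mp hAB hxA)
          · exact h3
          · exact absurd hv (Set.disjoint_left.mp hAB hbA)
          · exact h4
      · -- b ∈ B; where is c?
        rcases hcAB with hcA | hcB
        · -- partner c : a, b ∈ B
          obtain ⟨haB', hbB'⟩ := third_fourth (u₃ := a) (u₄ := b) hAB hB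
            (fun p hp => by rcases hmemB p hp with h|h|h|h <;> tauto) hxA hcA
          obtain ⟨A', B', hsplit, h1, h2, h3, h4⟩ :=
            claw_core G β hβ x c a b hac.symm (hbc.symm) hab
              hxc hxa hxb nca nab nbc
              o3 (by rwa [add_comm] at o1) (by rwa [add_comm] at o2)
          refine ⟨A', B', hsplit, ?_, ?_⟩
          · intro v hv
            rcases hmemA v hv with rfl | rfl | rfl | rfl
            · exact h1
            · exact absurd hv (Set.disjoint_right.mp hAB haB')
            · exact absurd hv (Set.disjoint_right.mp hAB hbB')
            · exact h2
          · intro v hv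
            rcases hmemB v hv with rfl | rfl | rfl | rfl
            · exact absurd hv (Set.disjoint_left.mp hAB hxA)
            · exact h3
            · exact h4
            · exact absurd hv (Set.disjoint_left.mp hAB hcA)
        · -- a, b, c ∈ B, only x ∈ A: contradicts A.Nontrivial
          exfalso
          obtain ⟨p, hp, q, hq, hpq⟩ := hA
          have hpB : ∀ z ∈ A, z = x := by
            intro z hz
            rcases hmemA z hz with rfl | rfl | rfl | rfl
            · rfl
            · exact absurd hz (Set.disjoint_right.mp hAB haB)
            · exact absurd hz (Set.disjoint_right.mp hAB hbB)
            · exact absurd hz (Set.disjoint_right.mp hAB hcB)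
          exact hpq ((hpB p hp).trans (hpB q hq).symm)
  · -- x ∈ B : symmetric, swap the roles of A and B
    rcases haAB with haA | haB
    · rcases hbAB with hbA | hbB
      · -- a, b ∈ A, x ∈ B; where is c?
        rcases hcAB with hcA | hcB
        · exfalso
          obtain ⟨p, hp, q, hq, hpq⟩ := hB
          have hpA : ∀ z ∈ B, z = x := by
            intro z hz
            rcases hmemB z hz with rfl | rfl | rfl | rfl
            · rfl
            · exact absurd hz (Set.disjoint_left.mp hAB haA)
            · exact absurd hz (Set.disjoint_left.mp hAB hbA)
            · exact absurd hz (Set.disjoint_left.mp hAB hcA)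
          exact hpq ((hpA p hp).trans (hpA q hq).symm)
        · -- partner of x is c : split core with (x,c | a,b), then swap
          obtain ⟨A', B', hsplit, h1, h2, h3, h4⟩ :=
            claw_core G β hβ x c a b hac.symm (hbc.symm) hab
              hxc hxa hxb nca nab nbc
              o3 (by rwa [add_comm] at o1) (by rwa [add_comm] at o2)
          refine ⟨B', A', isSplit_symm hsplit, ?_, ?_⟩
          · intro v hv
            rcases hmemA v hv with rfl | rfl | rfl | rfl
            · exact absurd hv (Set.disjoint_right.mp hAB hxB)
            · exact h3
            · exact h4
            · exact absurd hv (Set.disjoint_right.mp hAB hcB)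
          · intro v hv
            rcases hmemB v hv with rfl | rfl | rfl | rfl
            · exact h1
            · exact absurd hv (Set.disjoint_left.mp hAB haA)
            · exact absurd hv (Set.disjoint_left.mp hAB hbA)
            · exact h2
      · -- a ∈ A, b ∈ B with x; c must be in A
        have hcA : c ∈ A := by
          rcases hcAB with hcA | hcB
          · exact hcA
          · exfalso
            obtain ⟨p, hp, q, hq, hpq⟩ := hA
            have hpA : ∀ z ∈ A, z = a := by
              intro z hz
              rcases hmemA z hz with rfl | rfl | rfl | rfl
              · exact absurd hz (Set.disjoint_right.mp hAB hxB)
              · rfl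
              · exact absurd hz (Set.disjoint_right.mp hAB hbB)
              · exact absurd hz (Set.disjoint_right.mp hAB hcB)
            exact hpq ((hpA p hp).trans (hpA q hq).symm)
        -- partner of x is b : core with (x,b | a,c), swap
        obtain ⟨A', B', hsplit, h1, h2, h3, h4⟩ :=
          claw_core G β hβ x b a c hab.symm hbc hac
            hxb hxa hxc (fun h => nab h.symm) (fun h => nca h.symm) (fun h => nbc h.symm)
            o2 o1 (by rwa [add_comm] at o3)
        refine ⟨B', A', isSplit_symm hsplit, ?_, ?_⟩
        · intro v hv
          rcases hmemA v hv with rfl | rfl | rfl | rfl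
          · exact absurd hv (Set.disjoint_right.mp hAB hxB)
          · exact h3
          · exact absurd hv (Set.disjoint_right.mp hAB hbB)
          · exact h4
        · intro v hv
          rcases hmemB v hv with rfl | rfl | rfl | rfl
          · exact h1
          · exact absurd hv (Set.disjoint_left.mp hAB haA)
          · exact h2
          · exact absurd hv (Set.disjoint_left.mp hAB hcA)
    · -- a ∈ B with x: partner of x is a. b, c ∈ A.
      obtain ⟨hbA, hcA⟩ := third_fourth (u₃ := b) (u₄ := c) hAB.symm hA
        (fun p hp => by rcases hmemA p hp with h|h|h|h <;> tauto) hxB haB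
      obtain ⟨A', B', hsplit, h1, h2, h3, h4⟩ :=
        claw_core G β hβ x a b c hab hac hbc hxa hxb hxc nab nbc nca o1 o2 o3
      refine ⟨B', A', isSplit_symm hsplit, ?_, ?_⟩
      · intro v hv
        rcases hmemA v hv with rfl | rfl | rfl | rfl
        · exact absurd hv (Set.disjoint_right.mp hAB hxB)
        · exact absurd hv (Set.disjoint_right.mp hAB haB)
        · exact h3
        · exact h4
      · intro v hv
        rcases hmemB v hv with rfl | rfl | rfl | rfl
        · exact h1
        · exact h2
        · exact absurd hv (Set.disjoint_left.mp hAB hbA)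
        · exact absurd hv (Set.disjoint_left.mp hAB hcA)
end

section
/- Let G be a graph that admits a split (X, Y), let xy be an edge with x ∈ X and y ∈ Y, and let G₁ = G[X ∪ {y}] and G₂ = G[Y ∪ {x}]. If G₁ and G₂ are both circle graphs, then G is a circle graph. -/
/-- `G` is a circle graph: there is a cyclic double occurrence word (each vertex
appearing exactly twice on a circle of `2n` positions) such that two vertices
are adjacent iff their occurrences interleave. -/
def IsCircleGraph {V : Type*} [DecidableEq V] (G : SimpleGraph V) : Prop :=
  ∃ (n : ℕ) (w : Fin (2 * n) → V),
    (∀ v : V, (Finset.univ.filter fun i => w i = v).card = 2) ∧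
    (∀ u v : V, u ≠ v →
      (G.Adj u v ↔ ∃ i j : Fin (2 * n), i < j ∧ w i = u ∧ w j = u ∧
        (Finset.univ.filter fun k => w k = v ∧ i < k ∧ k < j).card = 1))

namespace CircleAux

open List

variable {α : Type*} [DecidableEq α]

/-- The subword of `l` on the letters `u, v`. -/
def pat (l : List α) (u v : α) : List α := l.filter (fun a => decide (a = u ∨ a = v))

/-- `u` and `v` interleave in `l`. -/
def Ilv (l : List α) (u v : α) : Prop := pat l u v = [u,v,u,v] ∨ pat l u v = [v,u,v,u]

theorem pat_append (l l' : List α) (u v : α) : pat (l ++ l') u v = pat l u v ++ pat l' u v :=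
  List.filter_append ..

theorem pat_cons_self (l : List α) (u v : α) : pat (u :: l) u v = u :: pat l u v := by simp [pat]

theorem pat_cons_ne (l : List α) {a u v : α} (h1 : a ≠ u) (h2 : a ≠ v) :
    pat (a :: l) u v = pat l u v := by simp [pat, h1, h2]

theorem pat_comm (l : List α) (u v : α) : pat l u v = pat l v u := by
  simp only [pat]; exact List.filter_congr (fun a _ => by simp [or_comm])

theorem Ilv_comm (l : List α) (u v : α) : Ilv l u v ↔ Ilv l v u := by
  unfold Ilv; rw [pat_comm, or_comm]

theorem pat_eq_rep_left (l : List α) (u v : α) (hv : v ∉ l) :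
    pat l u v = replicate (l.count u) u := by
  rw [pat, ← List.filter_eq (l := l) u]
  apply List.filter_congr
  intro a ha
  simp only [decide_eq_decide]
  constructor
  · rintro (rfl | rfl); rfl; exact absurd ha hv
  · rintro rfl; left; rfl

theorem pat_eq_rep_right (l : List α) (u v : α) (hu : u ∉ l) :
    pat l u v = replicate (l.count v) v := by
  rw [pat_comm]; exact pat_eq_rep_left l v u hu

theorem decomp_of_count_two {l : List α} {u : α} (h : l.count u = 2) :
    ∃ a b c, l = a ++ u :: b ++ u :: c ∧ u ∉ a ∧ u ∉ b ∧ u ∉ c := by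
  have hu : u ∈ l := by rw [← List.count_pos_iff]; omega
  obtain ⟨a, t, rfl⟩ := List.append_of_mem hu
  rw [List.count_append, List.count_cons_self] at h
  rcases Nat.lt_or_ge 0 (t.count u) with ht | ht
  · have hu2 : u ∈ t := by rw [← List.count_pos_iff]; omega
    obtain ⟨b, c, rfl⟩ := List.append_of_mem hu2
    rw [List.count_append, List.count_cons_self] at h
    refine ⟨a, b, c, by simp, ?_, ?_, ?_⟩ <;> rw [← List.count_eq_zero] <;> omega
  · have hta : a.count u = 1 := by omega
    have hu2 : u ∈ a := by rw [← List.count_pos_iff]; omega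
    obtain ⟨a', b, rfl⟩ := List.append_of_mem hu2
    rw [List.count_append, List.count_cons_self] at hta
    refine ⟨a', b, t, by simp, ?_, ?_, ?_⟩ <;> rw [← List.count_eq_zero] <;> omega

theorem alt_iff (u v : α) (huv : u ≠ v) {p q r a b : ℕ} (h1 : p + q + r = 2) (h2 : a + b = 2) :
    (replicate p u ++ replicate a v ++ replicate q u ++ replicate b v ++ replicate r u = [u,v,u,v] ∨
     replicate p u ++ replicate a v ++ replicate q u ++ replicate b v ++ replicate r u = [v,u,v,u]) ↔
    (q = 1 ∧ a = 1) := by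
  have hp : p ≤ 2 := by omega
  have hq : q ≤ 2 := by omega
  have hr : r ≤ 2 := by omega
  have ha : a ≤ 2 := by omega
  have hb : b ≤ 2 := by omega
  interval_cases p <;> interval_cases q <;> interval_cases r <;> interval_cases a <;>
    interval_cases b <;> (try omega) <;> simp_all [List.replicate_succ]

theorem Ilv_iff_decomp {l : List α} {u v : α} (huv : u ≠ v)
    (hu : l.count u = 2) (hv : l.count v = 2) :
    Ilv l u v ↔ ∃ a b c, l = a ++ u :: b ++ u :: c ∧ b.count v = 1 := by
  constructor
  · intro hIlv
    obtain ⟨a, b, c, rfl, ha, hb, hc⟩ := decomp_of_count_two hu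
    refine ⟨a, b, c, by simp, ?_⟩
    have hv' : a.count v + b.count v + c.count v = 2 := by
      rw [List.count_append, List.count_append, List.count_cons, List.count_cons] at hv
      simp [huv, huv.symm] at hv; omega
    have hpat : pat (a ++ u :: b ++ u :: c) u v
        = replicate (a.count v) v ++ replicate 1 u ++ replicate (b.count v) v ++
          replicate 1 u ++ replicate (c.count v) v := by
      rw [show a ++ u :: b ++ u :: c = a ++ ([u] ++ (b ++ ([u] ++ c))) by simp,
        pat_append, pat_append, pat_append, pat_append,
        pat_eq_rep_right a u v ha, pat_eq_rep_right b u v hb, pat_eq_rep_right c u v hc,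
        pat_cons_self]
      simp [pat, huv]
    unfold Ilv at hIlv
    rw [hpat] at hIlv
    have := (alt_iff v u huv.symm (p := a.count v) (q := b.count v) (r := c.count v)
      (a := 1) (b := 1) hv' rfl).mp hIlv.symm
    exact this.1
  · rintro ⟨a, b, c, rfl, hb1⟩
    have hufree : u ∉ a ∧ u ∉ b ∧ u ∉ c := by
      rw [List.count_append, List.count_append, List.count_cons_self, List.count_cons_self] at hu
      refine ⟨?_, ?_, ?_⟩ <;> rw [← List.count_eq_zero] <;> omega
    obtain ⟨ha, hb, hc⟩ := hufree
    have hv' : a.count v + b.count v + c.count v = 2 := by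
      rw [List.count_append, List.count_append, List.count_cons, List.count_cons] at hv
      simp [huv, huv.symm] at hv; omega
    have hpat : pat (a ++ u :: b ++ u :: c) u v
        = replicate (a.count v) v ++ replicate 1 u ++ replicate (b.count v) v ++
          replicate 1 u ++ replicate (c.count v) v := by
      rw [show a ++ u :: b ++ u :: c = a ++ ([u] ++ (b ++ ([u] ++ c))) by simp,
        pat_append, pat_append, pat_append, pat_append,
        pat_eq_rep_right a u v ha, pat_eq_rep_right b u v hb, pat_eq_rep_right c u v hc,
        pat_cons_self]
      simp [pat, huv]
    unfold Ilv
    rw [hpat]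
    exact ((alt_iff v u huv.symm (p := a.count v) (q := b.count v) (r := c.count v)
      (a := 1) (b := 1) hv' rfl).mpr ⟨hb1, rfl⟩).symm

theorem rot4 {s t : List α} {u v : α}
    (h : s ++ t = [u,v,u,v] ∨ s ++ t = [v,u,v,u]) :
    (t ++ s = [u,v,u,v] ∨ t ++ s = [v,u,v,u]) := by
  rcases s with _|⟨a, _|⟨b, _|⟨c, _|⟨d, s⟩⟩⟩⟩ <;> rcases h with h | h <;> simp_all

theorem count_ofFn {n : ℕ} (w : Fin n → α) (a : α) :
    (List.ofFn w).count a = (Finset.univ.filter fun i => w i = a).card := by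
  rw [List.ofFn_eq_map, List.count, List.countP_map]
  rw [Finset.card_def, Finset.filter_val]
  have huniv : (Finset.univ : Finset (Fin n)).val = ↑(List.finRange n) := rfl
  rw [huniv, Multiset.filter_coe, Multiset.coe_card, ← List.countP_eq_length_filter]
  rfl

theorem count_list (l : List α) (a : α) :
    l.count a = (Finset.univ.filter fun i : Fin l.length => l[(i : ℕ)] = a).card := by
  conv_lhs => rw [← List.ofFn_getElem (xs := l)]
  rw [count_ofFn]

theorem getL (a b : List α) (u : α) (h : a.length < (a ++ u :: b).length) :
    (a ++ u :: b)[a.length] = u := by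
  rw [List.getElem_append_right (le_refl _)]
  simp

theorem getM (a b : List α) (u : α) (m : ℕ) (hm : m < b.length)
    (h : a.length + 1 + m < (a ++ u :: b).length) :
    (a ++ u :: b)[a.length + 1 + m] = b[m] := by
  rw [List.getElem_append_right (by omega)]
  simp only [show a.length + 1 + m - a.length = m + 1 from by omega]
  simp

theorem sub_count {n : ℕ} (w : Fin n → α) (u v : α) (a b c : List α)
    (hl : List.ofFn w = a ++ u :: b ++ u :: c) :
    (Finset.univ.filter fun k : Fin n =>
        w k = v ∧ a.length < (k : ℕ) ∧ (k : ℕ) < a.length + b.length + 1).card = b.count v := by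
  have hn : n = a.length + b.length + c.length + 2 := by
    have := congrArg List.length hl
    simp at this; omega
  have key : ∀ (L : List α), L = a ++ u :: b ++ u :: c → ∀ (m : ℕ) (hm : m < b.length)
      (h : a.length + 1 + m < L.length), L[a.length + 1 + m] = b[m] := by
    rintro _ rfl m hm h
    rw [List.getElem_append_left (by simp; omega)]
    exact getM a b u m hm (by simp; omega)
  have hget : ∀ (m : ℕ) (hm : m < b.length) (h : a.length + 1 + m < n),
      w ⟨a.length + 1 + m, h⟩ = b[m] := by
    intro m hm h
    have h2 : a.length + 1 + m < (List.ofFn w).length := by simp; omega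
    rw [← List.getElem_ofFn (f := w) (i := a.length + 1 + m) h2]
    exact key _ hl m hm h2
  rw [count_list]
  refine Finset.card_bij' (fun k hk => ⟨(k : ℕ) - (a.length + 1), ?_⟩)
    (fun m hm => ⟨a.length + 1 + (m : ℕ), by omega⟩) ?_ ?_ ?_ ?_
  · simp only [Finset.mem_filter] at hk; omega
  · intro k hk
    simp only [Finset.mem_filter, Finset.mem_univ, true_and] at hk ⊢
    obtain ⟨hkv, hk1, hk2⟩ := hk
    rw [← hget ((k : ℕ) - (a.length + 1)) (by omega) (by omega)]
    rw [← hkv]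
    congr 1
    apply Fin.ext
    simp; omega
  · intro m hm
    simp only [Finset.mem_filter, Finset.mem_univ, true_and] at hm ⊢
    refine ⟨?_, by omega, by omega⟩
    rw [hget (m : ℕ) m.isLt _]
    exact hm
  · intro k hk
    simp only [Finset.mem_filter, Finset.mem_univ, true_and] at hk
    apply Fin.ext
    simp; omega
  · intro m hm
    apply Fin.ext
    simp

theorem split_at (l : List α) (i : ℕ) (h : i < l.length) :
    l = l.take i ++ l[i] :: l.drop (i + 1) := by
  conv_lhs => rw [← List.take_append_drop i l]
  rw [List.drop_eq_getElem_cons h]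

theorem pos_iff_decomp {n : ℕ} (w : Fin n → α) (u v : α) :
    (∃ i j : Fin n, i < j ∧ w i = u ∧ w j = u ∧
        (Finset.univ.filter fun k => w k = v ∧ i < k ∧ k < j).card = 1) ↔
    ∃ a b c, List.ofFn w = a ++ u :: b ++ u :: c ∧ b.count v = 1 := by
  constructor
  · rintro ⟨i, j, hij, hiu, hju, hcard⟩
    set l := List.ofFn w with hldef
    have hlen : l.length = n := by simp [hldef]
    have hijv : (i : ℕ) < (j : ℕ) := hij
    have hjn : (j : ℕ) < n := j.isLt
    set a := l.take (i : ℕ) with hadef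
    set b := (l.drop ((i : ℕ) + 1)).take ((j : ℕ) - (i : ℕ) - 1) with hbdef
    set c := (l.drop ((i : ℕ) + 1)).drop ((j : ℕ) - (i : ℕ) - 1 + 1) with hcdef
    have hd : (l.drop ((i : ℕ) + 1)).length = n - ((i : ℕ) + 1) := by simp [hlen]
    have hbc : l.drop ((i : ℕ) + 1) = b ++ u :: c := by
      have h2 := split_at (l.drop ((i : ℕ) + 1)) ((j : ℕ) - (i : ℕ) - 1) (by omega)
      rw [List.getElem_drop] at h2
      rw [h2]
      congr 2
      simp only [show (i : ℕ) + 1 + ((j : ℕ) - (i : ℕ) - 1) = (j : ℕ) from by omega]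
      rw [List.getElem_of_eq hldef (by omega), List.getElem_ofFn]
      simpa using hju
    have hdecomp : l = a ++ u :: b ++ u :: c := by
      rw [show a ++ u :: b ++ u :: c = a ++ (u :: (b ++ u :: c)) from by simp]
      have h1 := split_at l (i : ℕ) (by omega)
      rw [h1, hbc]
      congr 2
      rw [List.getElem_of_eq hldef (by omega), List.getElem_ofFn]
      simpa using hiu
    have halen : a.length = (i : ℕ) := by
      rw [hadef, List.length_take]; omega
    have hblen : b.length = (j : ℕ) - (i : ℕ) - 1 := by
      rw [hbdef, List.length_take]; omega
    refine ⟨a, b, c, hdecomp, ?_⟩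
    rw [← sub_count w u v a b c hdecomp, ← hcard]
    congr 1
    apply Finset.filter_congr
    intro k _
    rw [Fin.lt_def, Fin.lt_def]
    constructor <;> rintro ⟨h1, h2, h3⟩ <;> exact ⟨h1, by omega, by omega⟩
  · rintro ⟨a, b, c, hl, hb⟩
    have hn : n = a.length + b.length + c.length + 2 := by
      have := congrArg List.length hl
      simp at this; omega
    have hlen : (List.ofFn w).length = n := by simp
    refine ⟨⟨a.length, by omega⟩, ⟨a.length + b.length + 1, by omega⟩,
      by simp [Fin.lt_def], ?_, ?_, ?_⟩
    · have h0 := List.getElem_ofFn (f := w) (i := a.length) (by omega)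
      rw [← h0, List.getElem_of_eq hl (by omega)]
      rw [List.getElem_append_left (by simp)]
      exact getL a b u (by simp)
    · have h0 := List.getElem_ofFn (f := w) (i := a.length + b.length + 1) (by omega)
      rw [← h0, List.getElem_of_eq hl (by omega)]
      rw [List.getElem_append_right (by simp; omega)]
      simp only [show a.length + b.length + 1 - (a ++ u :: b).length = 0 from by simp]
      rfl
    · refine Eq.trans ?_ hb
      rw [← sub_count w u v a b c hl]
      congr 1

theorem Ilv_map {β : Type*} [DecidableEq β] {f : α → β} (hf : Function.Injective f)
    (l : List α) (u v : α) : Ilv (l.map f) (f u) (f v) ↔ Ilv l u v := by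
  have hpat : pat (l.map f) (f u) (f v) = (pat l u v).map f := by
    unfold pat
    rw [List.filter_map]
    congr 1
    apply List.filter_congr
    intro a _
    simp [Function.comp, hf.eq_iff]
  unfold Ilv
  rw [hpat]
  constructor
  · rintro (h | h)
    · exact Or.inl (List.map_injective_iff.mpr hf (by simpa using h))
    · exact Or.inr (List.map_injective_iff.mpr hf (by simpa using h))
  · rintro (h | h) <;> rw [h] <;> simp

theorem exists_good_list {V : Type*} [DecidableEq V] (G : SimpleGraph V) (S : Set V)
    (h : IsCircleGraph (G.induce S)) :
    ∃ l : List V, (∀ a ∈ l, a ∈ S) ∧ (∀ v ∈ S, l.count v = 2) ∧ (∃ m, l.length = 2 * m) ∧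
      (∀ u v : V, u ∈ S → v ∈ S → u ≠ v → (G.Adj u v ↔ Ilv l u v)) := by
  obtain ⟨n, w, hcount, hadj⟩ := h
  refine ⟨(List.ofFn w).map Subtype.val, ?_, ?_, ⟨n, by simp⟩, ?_⟩
  · intro a ha
    obtain ⟨b, _, rfl⟩ := List.mem_map.mp ha
    exact b.2
  · intro v hv
    rw [@List.count_map_of_injective _ _ instBEqOfDecidableEq _ _ _ _ _ Subtype.val_injective ⟨v, hv⟩, count_ofFn]
    exact hcount ⟨v, hv⟩
  · intro u v hu hv huv
    have hne : (⟨u, hu⟩ : S) ≠ ⟨v, hv⟩ := fun h' => huv (congrArg Subtype.val h')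
    rw [show G.Adj u v ↔ (G.induce S).Adj ⟨u, hu⟩ ⟨v, hv⟩ from Iff.rfl]
    rw [hadj _ _ hne, pos_iff_decomp]
    rw [← Ilv_iff_decomp hne (by rw [count_ofFn]; exact hcount _)
      (by rw [count_ofFn]; exact hcount _)]
    exact (Ilv_map Subtype.val_injective _ _ _).symm

end CircleAux

/-- Composition along a split: if `(X,Y)` is a split of `G`, `xy` an edge with
`x ∈ X`, `y ∈ Y`, and both `G[X ∪ {y}]` and `G[Y ∪ {x}]` are circle graphs,
then so is `G`. -/
theorem circle_graph_split_composition {V : Type*} [DecidableEq V]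
    (G : SimpleGraph V) (X Y : Set V) (hsplit : IsSplit G X Y)
    (x y : V) (hx : x ∈ X) (hy : y ∈ Y) (hxy : G.Adj x y)
    (h₁ : IsCircleGraph (G.induce (X ∪ {y})))
    (h₂ : IsCircleGraph (G.induce (Y ∪ {x}))) :
    IsCircleGraph G := by
  classical
  obtain ⟨hcover, hdisj, -, -, hprop⟩ := hsplit
  have hXY : ∀ a : V, a ∈ X ∨ a ∈ Y := by
    intro a
    have : a ∈ X ∪ Y := hcover ▸ Set.mem_univ a
    exact this
  have hnXY : ∀ a : V, a ∈ X → a ∉ Y := fun a ha => Set.disjoint_left.mp hdisj ha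
  obtain ⟨l₁, hmem₁, hcount₁, ⟨n₁, hlen₁⟩, hadj₁⟩ := CircleAux.exists_good_list G (X ∪ {y}) h₁
  obtain ⟨l₂, hmem₂, hcount₂, ⟨n₂, hlen₂⟩, hadj₂⟩ := CircleAux.exists_good_list G (Y ∪ {x}) h₂
  have hyS : y ∈ X ∪ {y} := Set.mem_union_right _ rfl
  have hxS : x ∈ Y ∪ {x} := Set.mem_union_right _ rfl
  obtain ⟨P, Q, R, hl1, hyP, hyQ, hyR⟩ := CircleAux.decomp_of_count_two (hcount₁ y hyS)
  obtain ⟨C, A, B, hl2, hxC, hxA, hxB⟩ := CircleAux.decomp_of_count_two (hcount₂ x hxS)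
  -- piece memberships
  have hpiece₁ : ∀ (T : List V), (∀ a ∈ T, a ∈ l₁) → y ∉ T → ∀ a ∈ T, a ∈ X := by
    intro T hT hyT a ha
    rcases hmem₁ a (hT a ha) with h | h
    · exact h
    · rw [Set.mem_singleton_iff] at h
      subst h
      exact absurd ha hyT
  have hpiece₂ : ∀ (T : List V), (∀ a ∈ T, a ∈ l₂) → x ∉ T → ∀ a ∈ T, a ∈ Y := by
    intro T hT hxT a ha
    rcases hmem₂ a (hT a ha) with h | h
    · exact h
    · rw [Set.mem_singleton_iff] at h
      subst h
      exact absurd ha hxT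
  have hPX : ∀ a ∈ P, a ∈ X := hpiece₁ P (fun a ha => by rw [hl1]; simp [ha]) hyP
  have hQX : ∀ a ∈ Q, a ∈ X := hpiece₁ Q (fun a ha => by rw [hl1]; simp [ha]) hyQ
  have hRX : ∀ a ∈ R, a ∈ X := hpiece₁ R (fun a ha => by rw [hl1]; simp [ha]) hyR
  have hAY : ∀ a ∈ A, a ∈ Y := hpiece₂ A (fun a ha => by rw [hl2]; simp [ha]) hxA
  have hBY : ∀ a ∈ B, a ∈ Y := hpiece₂ B (fun a ha => by rw [hl2]; simp [ha]) hxB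
  have hCY : ∀ a ∈ C, a ∈ Y := hpiece₂ C (fun a ha => by rw [hl2]; simp [ha]) hxC
  set L : List V := P ++ A ++ Q ++ B ++ C ++ R with hLdef
  -- lengths
  have he1 : l₁.length = P.length + Q.length + R.length + 2 := by
    rw [hl1]; simp; omega
  have he2 : l₂.length = C.length + A.length + B.length + 2 := by
    rw [hl2]; simp; omega
  have hc1 : (2 : ℕ) ≤ l₁.length := le_trans (le_of_eq (hcount₁ y hyS).symm) (List.count_le_length (a := y) (l := l₁))
  have hc2 : (2 : ℕ) ≤ l₂.length := le_trans (le_of_eq (hcount₂ x hxS).symm) (List.count_le_length (a := x) (l := l₂))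
  have hLlen : L.length = 2 * (n₁ + n₂ - 2) := by
    rw [hLdef]; simp; omega
  -- counts in L
  have hLcount : ∀ v : V, L.count v = 2 := by
    intro v
    have hzero : ∀ (T : List V), v ∉ T → T.count v = 0 :=
      fun T h => List.count_eq_zero_of_not_mem h
    rcases hXY v with hv | hv
    · have h1 : l₁.count v = 2 := hcount₁ v (Set.mem_union_left _ hv)
      have hvy : v ≠ y := fun h => hnXY v hv (h ▸ hy)
      rw [hl1] at h1
      simp only [List.count_append, List.count_cons_of_ne hvy.symm] at h1
      have hA0 : A.count v = 0 := hzero A (fun hm => hnXY v hv (hAY v hm))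
      have hB0 : B.count v = 0 := hzero B (fun hm => hnXY v hv (hBY v hm))
      have hC0 : C.count v = 0 := hzero C (fun hm => hnXY v hv (hCY v hm))
      rw [hLdef]
      simp only [List.count_append, hA0, hB0, hC0]
      omega
    · have h1 : l₂.count v = 2 := hcount₂ v (Set.mem_union_left _ hv)
      have hvx : v ≠ x := fun h => hnXY x hx (h ▸ hv)
      rw [hl2] at h1
      simp only [List.count_append, List.count_cons_of_ne hvx.symm] at h1
      have hP0 : P.count v = 0 := hzero P (fun hm => hnXY v (hPX v hm) hv)
      have hQ0 : Q.count v = 0 := hzero Q (fun hm => hnXY v (hQX v hm) hv)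
      have hR0 : R.count v = 0 := hzero R (fun hm => hnXY v (hRX v hm) hv)
      rw [hLdef]
      simp only [List.count_append, hP0, hQ0, hR0]
      omega
  -- the key adjacency equivalence
  have hKeyXY : ∀ u v : V, u ∈ X → v ∈ Y → (G.Adj u v ↔ CircleAux.Ilv L u v) := by
    intro u v hu hv
    have huv : u ≠ v := fun h => hnXY u hu (h ▸ hv)
    have huy : u ≠ y := fun h => hnXY u hu (h ▸ hy)
    have hvx : v ≠ x := fun h => hnXY x hx (h ▸ hv)
    have hpqr : P.count u + Q.count u + R.count u = 2 := by
      have h1 := hcount₁ u (Set.mem_union_left _ hu)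
      rw [hl1] at h1
      simp only [List.count_append, List.count_cons_of_ne huy.symm] at h1
      omega
    have habc : C.count v + A.count v + B.count v = 2 := by
      have h2 := hcount₂ v (Set.mem_union_left _ hv)
      rw [hl2] at h2
      simp only [List.count_append, List.count_cons_of_ne hvx.symm] at h2
      omega
    have hnuA : u ∉ A := fun hm => hnXY u hu (hAY u hm)
    have hnuB : u ∉ B := fun hm => hnXY u hu (hBY u hm)
    have hnuC : u ∉ C := fun hm => hnXY u hu (hCY u hm)
    have hnvP : v ∉ P := fun hm => hnXY v (hPX v hm) hv
    have hnvQ : v ∉ Q := fun hm => hnXY v (hQX v hm) hv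
    have hnvR : v ∉ R := fun hm => hnXY v (hRX v hm) hv
    have hpatL : CircleAux.pat L u v =
        List.replicate (P.count u) u ++ List.replicate (A.count v) v ++
        List.replicate (Q.count u) u ++ List.replicate (B.count v + C.count v) v ++
        List.replicate (R.count u) u := by
      rw [hLdef]
      simp only [CircleAux.pat_append]
      rw [CircleAux.pat_eq_rep_left P u v hnvP, CircleAux.pat_eq_rep_left Q u v hnvQ,
        CircleAux.pat_eq_rep_left R u v hnvR, CircleAux.pat_eq_rep_right A u v hnuA,
        CircleAux.pat_eq_rep_right B u v hnuB, CircleAux.pat_eq_rep_right C u v hnuC,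
        List.replicate_add]
      simp [List.append_assoc]
    have h1 : CircleAux.Ilv L u v ↔ (Q.count u = 1 ∧ A.count v = 1) := by
      unfold CircleAux.Ilv
      rw [hpatL]
      exact CircleAux.alt_iff u v huv (by omega) (by omega)
    have h2 : G.Adj u y ↔ Q.count u = 1 := by
      rw [hadj₁ u y (Set.mem_union_left _ hu) hyS huy]
      unfold CircleAux.Ilv
      have hpQ : CircleAux.pat l₁ u y =
          List.replicate (P.count u) u ++ List.replicate 1 y ++
          List.replicate (Q.count u) u ++ List.replicate 1 y ++
          List.replicate (R.count u) u := by
        rw [hl1, show (P ++ y :: Q) ++ y :: R = P ++ [y] ++ Q ++ [y] ++ R from by simp]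
        simp only [CircleAux.pat_append]
        rw [CircleAux.pat_eq_rep_left P u y hyP, CircleAux.pat_eq_rep_left Q u y hyQ,
          CircleAux.pat_eq_rep_left R u y hyR]
        simp [CircleAux.pat]
      rw [hpQ, CircleAux.alt_iff u y huy (by omega) (by omega)]
      simp
    have h3 : G.Adj x v ↔ A.count v = 1 := by
      rw [hadj₂ x v hxS (Set.mem_union_left _ hv) (fun h => hvx h.symm)]
      unfold CircleAux.Ilv
      have hpA : CircleAux.pat l₂ x v =
          List.replicate (C.count v) v ++ List.replicate 1 x ++
          List.replicate (A.count v) v ++ List.replicate 1 x ++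
          List.replicate (B.count v) v := by
        rw [hl2, show (C ++ x :: A) ++ x :: B = C ++ [x] ++ A ++ [x] ++ B from by simp]
        simp only [CircleAux.pat_append]
        rw [CircleAux.pat_eq_rep_right C x v hxC, CircleAux.pat_eq_rep_right A x v hxA,
          CircleAux.pat_eq_rep_right B x v hxB]
        simp [CircleAux.pat]
      rw [hpA, or_comm, CircleAux.alt_iff v x hvx (by omega) (by omega)]
      simp
    have h4 : G.Adj u v ↔ (G.Adj u y ∧ G.Adj x v) := by
      constructor
      · intro h
        exact ⟨hprop u hu x hx v hv y hy h hxy, hprop x hx u hu y hy v hv hxy h⟩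
      · rintro ⟨ha, hb⟩
        exact hprop u hu x hx y hy v hv ha hb
    rw [h4, h2, h3, h1]
  have hKeyXX : ∀ u v : V, u ≠ v → u ∈ X → v ∈ X → (G.Adj u v ↔ CircleAux.Ilv L u v) := by
    intro u v huv hu hv
    have hpat0 : ∀ T : List V, (∀ a ∈ T, a ∈ Y) → CircleAux.pat T u v = [] := by
      intro T hT
      unfold CircleAux.pat
      rw [List.filter_eq_nil_iff]
      intro a ha
      simp only [decide_eq_true_eq]
      rintro (rfl | rfl)
      · exact hnXY a hu (hT a ha)
      · exact hnXY a hv (hT a ha)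
    have hyu : y ≠ u := fun h => hnXY u hu (h ▸ hy)
    have hyv : y ≠ v := fun h => hnXY v hv (h ▸ hy)
    have hpatL : CircleAux.pat L u v = CircleAux.pat l₁ u v := by
      rw [hLdef, hl1]
      simp only [CircleAux.pat_append]
      rw [hpat0 A hAY, hpat0 B hBY, hpat0 C hCY,
        CircleAux.pat_cons_ne Q hyu hyv, CircleAux.pat_cons_ne R hyu hyv]
      simp
    rw [hadj₁ u v (Set.mem_union_left _ hu) (Set.mem_union_left _ hv) huv]
    unfold CircleAux.Ilv
    rw [hpatL]
  have hKeyYY : ∀ u v : V, u ≠ v → u ∈ Y → v ∈ Y → (G.Adj u v ↔ CircleAux.Ilv L u v) := by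
    intro u v huv hu hv
    have hpat0 : ∀ T : List V, (∀ a ∈ T, a ∈ X) → CircleAux.pat T u v = [] := by
      intro T hT
      unfold CircleAux.pat
      rw [List.filter_eq_nil_iff]
      intro a ha
      simp only [decide_eq_true_eq]
      rintro (rfl | rfl)
      · exact hnXY a (hT a ha) hu
      · exact hnXY a (hT a ha) hv
    have hxu : x ≠ u := fun h => hnXY x hx (h ▸ hu)
    have hxv : x ≠ v := fun h => hnXY x hx (h ▸ hv)
    have hpatL : CircleAux.pat L u v =
        (CircleAux.pat A u v ++ CircleAux.pat B u v) ++ CircleAux.pat C u v := by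
      rw [hLdef]
      simp only [CircleAux.pat_append]
      rw [hpat0 P hPX, hpat0 Q hQX, hpat0 R hRX]
      simp
    have hpatl2 : CircleAux.pat l₂ u v =
        CircleAux.pat C u v ++ (CircleAux.pat A u v ++ CircleAux.pat B u v) := by
      rw [hl2]
      simp only [CircleAux.pat_append]
      rw [CircleAux.pat_cons_ne A hxu hxv, CircleAux.pat_cons_ne B hxu hxv]
      simp
    rw [hadj₂ u v (Set.mem_union_left _ hu) (Set.mem_union_left _ hv) huv]
    unfold CircleAux.Ilv
    rw [hpatL, hpatl2]
    exact ⟨fun h => CircleAux.rot4 h, fun h => CircleAux.rot4 h⟩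
  have hKey : ∀ u v : V, u ≠ v → (G.Adj u v ↔ CircleAux.Ilv L u v) := by
    intro u v huv
    rcases hXY u with hu | hu <;> rcases hXY v with hv | hv
    · exact hKeyXX u v huv hu hv
    · exact hKeyXY u v hu hv
    · rw [G.adj_comm, CircleAux.Ilv_comm]
      exact hKeyXY v u hv hu
    · exact hKeyYY u v huv hu hv
  -- conclude
  have hofFn : List.ofFn (fun i : Fin (2 * (n₁ + n₂ - 2)) =>
      L[(i : ℕ)]'(by rw [hLlen]; exact i.isLt)) = L := by
    apply List.ext_getElem (by simp [hLlen])
    intro i h1 h2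
    simp
  refine ⟨n₁ + n₂ - 2, fun i => L[(i : ℕ)]'(by rw [hLlen]; exact i.isLt), ?_, ?_⟩
  · intro v
    rw [← CircleAux.count_ofFn, hofFn]
    exact hLcount v
  · intro u v huv
    rw [CircleAux.pos_iff_decomp, hofFn,
      ← CircleAux.Ilv_iff_decomp huv (hLcount u) (hLcount v)]
    exact hKey u v huv
end

section
/- If G is a circle graph, then the Naji system of G has a solution: there exists β : V × V → 𝔽₂ on ordered pairs of distinct vertices such that (1) β(v,w) + β(w,v) = 1 for each edge vw; (2) β(x,v) + β(x,w) = 0 whenever vw is an edge but xv, xw are not; (3) β(v,w) + β(w,v) + β(x,v) + β(x,w) = 1 whenever xv, xw are edges but vw is not. -/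
/-- Every circle graph admits a solution of its Naji system. -/
theorem circle_graph_naji_solution {V : Type*} [Fintype V] [DecidableEq V]
    (G : SimpleGraph V) (h : IsCircleGraph G) :
    ∃ β : V → V → ZMod 2, NajiSolution G β := by
  classical
  obtain ⟨n, c, hcard, hadj⟩ := h
  have key : ∀ v : V, ∃ i j : Fin (2 * n), i < j ∧ c i = v ∧ c j = v ∧
      ∀ k, c k = v → k = i ∨ k = j := by
    intro v
    obtain ⟨x, y, hxy, hs⟩ := Finset.card_eq_two.mp (hcard v)
    have hx : c x = v := by
      have : x ∈ Finset.univ.filter fun i => c i = v := by rw [hs]; simp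
      simpa using this
    have hy : c y = v := by
      have : y ∈ Finset.univ.filter fun i => c i = v := by rw [hs]; simp
      simpa using this
    have hall : ∀ k, c k = v → k = x ∨ k = y := by
      intro k hk
      have : k ∈ Finset.univ.filter fun i => c i = v := by simp [hk]
      rw [hs] at this; simpa using this
    rcases lt_or_gt_of_ne hxy with hlt | hlt
    · exact ⟨x, y, hlt, hx, hy, hall⟩
    · exact ⟨y, x, hlt, hy, hx, fun k hk => (hall k hk).symm⟩
  choose a b hab ha hb huniq using key
  have habn : ∀ v : V, (a v : ℕ) < (b v : ℕ) := fun v => hab v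
  have hvals : ∀ u v : V, u ≠ v →
      (a u : ℕ) ≠ (a v : ℕ) ∧ (a u : ℕ) ≠ (b v : ℕ) ∧
      (b u : ℕ) ≠ (a v : ℕ) ∧ (b u : ℕ) ≠ (b v : ℕ) := by
    intro u v huv
    have e : ∀ (i j : Fin (2 * n)), c i = u → c j = v → (i : ℕ) ≠ (j : ℕ) := by
      intro i j hi hj hc'
      apply huv
      rw [← hi, ← hj]
      exact congrArg c (Fin.val_injective hc')
    exact ⟨e _ _ (ha u) (ha v), e _ _ (ha u) (hb v),
      e _ _ (hb u) (ha v), e _ _ (hb u) (hb v)⟩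
  have card_eq : ∀ (i j : Fin (2 * n)) (v : V),
      (Finset.univ.filter fun k => c k = v ∧ i < k ∧ k < j).card =
      (({a v, b v} : Finset (Fin (2 * n))).filter fun k => i < k ∧ k < j).card := by
    intro i j v
    congr 1
    ext k
    simp only [Finset.mem_filter, Finset.mem_univ, true_and, Finset.mem_insert,
      Finset.mem_singleton]
    constructor
    · rintro ⟨hk, h1, h2⟩; exact ⟨huniq v k hk, h1, h2⟩
    · rintro ⟨hk, h1, h2⟩
      refine ⟨?_, h1, h2⟩
      rcases hk with rfl | rfl
      exacts [ha v, hb v]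
  have pair_card : ∀ (i j : Fin (2 * n)) (v : V),
      ((({a v, b v} : Finset (Fin (2 * n))).filter fun k => i < k ∧ k < j).card = 1 ↔
        ((i < a v ∧ a v < j) ↔ ¬(i < b v ∧ b v < j))) := by
    intro i j v
    have hne : a v ≠ b v := (hab v).ne
    by_cases h1 : i < a v ∧ a v < j <;> by_cases h2 : i < b v ∧ b v < j <;>
      simp [Finset.filter_insert, Finset.filter_singleton, h1, h2, hne]
  have adj_iff : ∀ u v : V, u ≠ v → (G.Adj u v ↔
      (((a u : ℕ) < a v ∧ (a v : ℕ) < b u) ↔ ¬((a u : ℕ) < b v ∧ (b v : ℕ) < b u))) := by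
    intro u v huv
    rw [hadj u v huv]
    constructor
    · rintro ⟨i, j, hij, hiu, hju, hc'⟩
      have hij' : i = a u ∧ j = b u := by
        rcases huniq u i hiu with rfl | rfl <;> rcases huniq u j hju with rfl | rfl
        · exact absurd hij (lt_irrefl _)
        · exact ⟨rfl, rfl⟩
        · exact absurd (hij.trans (hab u)) (lt_irrefl _)
        · exact absurd hij (lt_irrefl _)
      obtain ⟨rfl, rfl⟩ := hij'
      rw [card_eq] at hc'
      have := (pair_card _ _ v).mp hc'
      simp only [Fin.lt_def] at this; exact this
    · intro hx
      refine ⟨a u, b u, hab u, ha u, hb u, ?_⟩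
      rw [card_eq]
      refine (pair_card _ _ v).mpr ?_
      simp only [Fin.lt_def]; exact hx
  refine ⟨fun v u => if (a v : ℕ) < a u ∧ (a u : ℕ) < b v then 1 else 0, ?_, ?_, ?_⟩
  · -- condition (1)
    intro v w hvw
    have hne := G.ne_of_adj hvw
    have h1 := (adj_iff v w hne).mp hvw
    have d := hvals v w hne
    have e1 := habn v; have e2 := habn w
    dsimp only
    by_cases p1 : (a v : ℕ) < a w ∧ (a w : ℕ) < b v <;>
      by_cases p2 : (a w : ℕ) < a v ∧ (a v : ℕ) < b w <;>
      first
        | (simp only [p1, p2, if_true, if_false, eq_self_iff_true]; decide)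
        | (exfalso; omega)
  · -- condition (2)
    intro x v w hxv hxw hvw hnxv hnxw
    have hne := G.ne_of_adj hvw
    have h1 := (adj_iff v w hne).mp hvw
    have h2 : ¬(((a x : ℕ) < a v ∧ (a v : ℕ) < b x) ↔
        ¬((a x : ℕ) < b v ∧ (b v : ℕ) < b x)) :=
      fun hh => hnxv ((adj_iff x v hxv).mpr hh)
    have h3 : ¬(((a x : ℕ) < a w ∧ (a w : ℕ) < b x) ↔
        ¬((a x : ℕ) < b w ∧ (b w : ℕ) < b x)) :=
      fun hh => hnxw ((adj_iff x w hxw).mpr hh)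
    have d1 := hvals x v hxv; have d2 := hvals x w hxw; have d3 := hvals v w hne
    have e1 := habn x; have e2 := habn v; have e3 := habn w
    dsimp only
    by_cases p1 : (a x : ℕ) < a v ∧ (a v : ℕ) < b x <;>
      by_cases p2 : (a x : ℕ) < a w ∧ (a w : ℕ) < b x <;>
      first
        | (simp only [p1, p2, if_true, if_false, eq_self_iff_true]; decide)
        | (exfalso; omega)
  · -- condition (3)
    intro x v w hvw hxv hxw hnvw
    have h1 := (adj_iff x v (G.ne_of_adj hxv)).mp hxv
    have h2 := (adj_iff x w (G.ne_of_adj hxw)).mp hxw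
    have h3 : ¬(((a v : ℕ) < a w ∧ (a w : ℕ) < b v) ↔
        ¬((a v : ℕ) < b w ∧ (b w : ℕ) < b v)) :=
      fun hh => hnvw ((adj_iff v w hvw).mpr hh)
    have d1 := hvals x v (G.ne_of_adj hxv); have d2 := hvals x w (G.ne_of_adj hxw)
    have d3 := hvals v w hvw
    have e1 := habn x; have e2 := habn v; have e3 := habn w
    dsimp only
    by_cases p1 : (a v : ℕ) < a w ∧ (a w : ℕ) < b v <;>
      by_cases p2 : (a w : ℕ) < a v ∧ (a v : ℕ) < b w <;>
      by_cases p3 : (a x : ℕ) < a v ∧ (a v : ℕ) < b x <;>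
      by_cases p4 : (a x : ℕ) < a w ∧ (a w : ℕ) < b x <;>
      first
        | (simp only [p1, p2, p3, p4, if_true, if_false, eq_self_iff_true]; decide)
        | (exfalso; omega)
end
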